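/- arXiv:2304.06242 — 5 statements merged into one kernel-verified Lean document; each statement's English description precedes it below -/
import Mathlib

section
/- If φ ∈ B*(p), then its normal part φ_n and singular part φ_s (as functionals on the von Neumann algebra B(L²M)) belong to B*(p), with ‖φ_n‖_{B*(p)} ≤ ‖φ‖_{B*(p)} and ‖φ_s‖_{B*(p)} ≤ ‖φ‖_{B*(p)}. -/
noncomputable section

variable {H : Type*} [NormedAddCommGroup H] [InnerProductSpace ℂ H] [CompleteSpace H]

/-- A standard-form datum for a von Neumann algebra `M ⊆ B(H)`: a unit trace vector `Ω`
which is cyclic for `M` and for its commutant (hence separating), implementing a tracial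
state `τ(x) = ⟨xΩ, Ω⟩` on `M`.  This encodes a tracial von Neumann algebra `(M, τ)`
acting standardly on `H = L²(M, τ)`. -/
structure StandardForm (M : VonNeumannAlgebra H) where
  Ω : H
  norm_Ω : ‖Ω‖ = 1
  tracial : ∀ x ∈ M, ∀ y ∈ M,
    (inner ℂ ((x * y : H →L[ℂ] H) Ω) Ω : ℂ) = inner ℂ ((y * x : H →L[ℂ] H) Ω) Ω
  cyclic : Dense ((fun T : H →L[ℂ] H => T Ω) '' (M : Set (H →L[ℂ] H)))
  cyclic' : Dense ((fun T : H →L[ℂ] H => T Ω) '' (M.commutant : Set (H →L[ℂ] H)))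

variable {M : VonNeumannAlgebra H}

/-- The trace on `B(H)` induced by the trace vector: `τ(T) = ⟨TΩ, Ω⟩`. -/
def SFtrace (sf : StandardForm M) (T : H →L[ℂ] H) : ℂ := inner ℂ (T sf.Ω) sf.Ω

/-- The noncommutative `L^p`-norm `‖x‖_p = τ(|x|^p)^{1/p} = τ((x^*x)^{p/2})^{1/p}`. -/
def pNorm (sf : StandardForm M) (p : ℝ) (x : H →L[ℂ] H) : ℝ :=
  (SFtrace sf (cfc (fun t : ℝ => t ^ (p / 2)) (star x * x))).re ^ (1 / p)

/-- The set of values `‖φ(xTy)‖` over `‖T‖ ≤ 1`, `x, y ∈ M`, `‖x‖_p, ‖y‖_p ≤ 1`,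
whose supremum is `‖φ‖_{B^*(p)}`. -/
def dualSet (sf : StandardForm M) (p : ℝ) (φ : (H →L[ℂ] H) →L[ℂ] ℂ) : Set ℝ :=
  {r | ∃ x ∈ M, ∃ y ∈ M, ∃ T : H →L[ℂ] H,
    ‖T‖ ≤ 1 ∧ pNorm sf p x ≤ 1 ∧ pNorm sf p y ≤ 1 ∧ r = ‖φ (x * T * y)‖}

/-- Membership in `B^*(p)`: the defining supremum `‖φ‖_{B^*(p)}` is finite. -/
def MemBp (sf : StandardForm M) (p : ℝ) (φ : (H →L[ℂ] H) →L[ℂ] ℂ) : Prop :=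
  BddAbove (dualSet sf p φ)

/-- The norm `‖φ‖_{B^*(p)}`. -/
def BpNorm (sf : StandardForm M) (p : ℝ) (φ : (H →L[ℂ] H) →L[ℂ] ℂ) : ℝ :=
  sSup (dualSet sf p φ)

/-- `φ` is a normal functional on `B(H)`: a countable sum of vector functionals with
square-summable coefficients. -/
def IsNormalFunctional (φ : (H →L[ℂ] H) →L[ℂ] ℂ) : Prop :=
  ∃ ξ η : ℕ → H, Summable (fun n => ‖ξ n‖ ^ 2) ∧ Summable (fun n => ‖η n‖ ^ 2) ∧
    ∀ T : H →L[ℂ] H, φ T = ∑' n, (inner ℂ (T (ξ n)) (η n) : ℂ)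

/-- `φ` is a singular functional on `B(H)`: it annihilates the compact operators. -/
def IsSingularFunctional (φ : (H →L[ℂ] H) →L[ℂ] ℂ) : Prop :=
  ∀ T : H →L[ℂ] H, IsCompactOperator ⇑T → φ T = 0

section Aux

set_option linter.unusedSectionVars false

lemma aux_summable_mul {a b : ℕ → H} (ha : Summable fun n => ‖a n‖ ^ 2)
    (hb : Summable fun n => ‖b n‖ ^ 2) : Summable fun n => ‖a n‖ * ‖b n‖ := by
  refine Summable.of_nonneg_of_le (fun n => by positivity) (fun n => ?_) ((ha.add hb).div_const 2)
  have h := two_mul_le_add_sq (‖a n‖) (‖b n‖)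
  nlinarith

lemma aux_exists_proj (a b : ℕ → H) (N : ℕ) :
    ∃ Q : H →L[ℂ] H, IsCompactOperator ⇑Q ∧ (∀ v, ‖Q v‖ ≤ ‖v‖) ∧
      (∀ v, ‖v - Q v‖ ≤ ‖v‖) ∧
      (∀ u v : H, (inner ℂ (Q u) v : ℂ) = inner ℂ u (Q v)) ∧
      (∀ n < N, Q (a n) = a n) ∧ (∀ n < N, Q (b n) = b n) := by
  classical
  have hsfin : ((a '' Set.Iio N) ∪ (b '' Set.Iio N)).Finite :=
    ((Set.finite_Iio N).image a).union ((Set.finite_Iio N).image b)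
  set K : Submodule ℂ H := Submodule.span ℂ ((a '' Set.Iio N) ∪ (b '' Set.Iio N)) with hK
  haveI : FiniteDimensional ℂ K := FiniteDimensional.span_of_finite ℂ hsfin
  haveI : CompleteSpace K := FiniteDimensional.complete ℂ K
  set Q : H →L[ℂ] H := K.subtypeL.comp (K.orthogonalProjectionOnto) with hQ
  have hQapp : ∀ v : H, Q v = (K.orthogonalProjectionOnto v : H) := fun v => rfl
  have hcontr : ∀ v : H, ‖Q v‖ ≤ ‖v‖ := by
    intro v
    rw [hQapp]
    calc ‖(K.orthogonalProjectionOnto v : H)‖ = ‖K.orthogonalProjectionOnto v‖ := rfl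
      _ ≤ ‖K.orthogonalProjectionOnto‖ * ‖v‖ := (K.orthogonalProjectionOnto).le_opNorm v
      _ ≤ 1 * ‖v‖ := by
          have h := Submodule.orthogonalProjectionOnto_norm_le K
          gcongr
      _ = ‖v‖ := one_mul _
  have hmemQ : ∀ v : H, Q v ∈ K := fun v => (K.orthogonalProjectionOnto v).2
  have hfix : ∀ w ∈ K, Q w = w := fun w hw => K.starProjection_eq_self_iff.mpr hw
  refine ⟨Q, ?_, hcontr, ?_, ?_, ?_, ?_⟩
  · -- compact
    haveI : ProperSpace K := FiniteDimensional.proper ℂ K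
    refine ⟨((↑) : K → H) '' Metric.closedBall 0 1, ?_, ?_⟩
    · exact ((isCompact_closedBall (0 : K) 1).image continuous_subtype_val)
    · refine Filter.mem_of_superset (Metric.ball_mem_nhds (0 : H) one_pos) ?_
      intro v hv
      refine ⟨K.orthogonalProjectionOnto v, ?_, (hQapp v).symm⟩
      rw [Metric.mem_closedBall, dist_zero_right]
      have h1 : ‖K.orthogonalProjectionOnto v‖ = ‖Q v‖ := rfl
      rw [h1]
      exact (hcontr v).trans (le_of_lt (by simpa [dist_zero_right] using hv))
  · -- ‖v - Q v‖ ≤ ‖v‖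
    intro v
    have horth : (inner ℂ (v - Q v) (Q v) : ℂ) = 0 := by
      rw [hQapp]
      exact K.starProjection_inner_eq_zero v _ (hmemQ v)
    have hpyth : ‖v‖ ^ 2 = ‖v - Q v‖ ^ 2 + ‖Q v‖ ^ 2 := by
      have h2 := @norm_add_sq ℂ _ _ _ _ (v - Q v) (Q v)
      rw [sub_add_cancel] at h2
      rw [h2, horth]
      simp
    nlinarith [norm_nonneg (v - Q v), norm_nonneg v, norm_nonneg (Q v)]
  · -- symmetric
    intro u v
    rw [hQapp, hQapp]
    exact K.inner_starProjection_left_eq_right u v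
  · exact fun n hn => hfix _ (Submodule.subset_span (Or.inl ⟨n, hn, rfl⟩))
  · exact fun n hn => hfix _ (Submodule.subset_span (Or.inr ⟨n, hn, rfl⟩))

end Aux

set_option maxHeartbeats 2000000 in
/-- If `φ ∈ B^*(p)` then its normal and singular parts `φ_n, φ_s`
(the Takesaki decomposition `φ = φ_n + φ_s` with `φ_n` normal and `φ_s` singular)
belong to `B^*(p)`, with `‖φ_n‖_{B^*(p)} ≤ ‖φ‖_{B^*(p)}` and
`‖φ_s‖_{B^*(p)} ≤ ‖φ‖_{B^*(p)}`. -/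
theorem Bp_normal_singular_parts (sf : StandardForm M) (p : ℝ) (hp : 2 ≤ p)
    (φ φn φs : (H →L[ℂ] H) →L[ℂ] ℂ) (hφ : MemBp sf p φ)
    (hdec : φ = φn + φs) (hn : IsNormalFunctional φn) (hs : IsSingularFunctional φs) :
    (MemBp sf p φn ∧ BpNorm sf p φn ≤ BpNorm sf p φ) ∧
    (MemBp sf p φs ∧ BpNorm sf p φs ≤ BpNorm sf p φ) := by
  obtain ⟨ξ, η, hξ, hη, hφn⟩ := hn
  have hp0 : (0:ℝ) < p := lt_of_lt_of_le two_pos hp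
  -- `0` belongs to every dual set
  have hpn0 : pNorm sf p (0 : H →L[ℂ] H) ≤ 1 := by
    unfold pNorm SFtrace
    rw [star_zero, zero_mul, cfc_apply_zero]
    rw [Real.zero_rpow (by positivity)]
    rw [map_zero]
    simp only [ContinuousLinearMap.zero_apply, inner_zero_left, Complex.zero_re]
    rw [Real.zero_rpow (by positivity)]
    exact zero_le_one
  have hzero : ∀ ψ : (H →L[ℂ] H) →L[ℂ] ℂ, (0:ℝ) ∈ dualSet sf p ψ := by
    intro ψ
    exact ⟨0, zero_mem M, 0, zero_mem M, 0, by simp, hpn0, hpn0, by simp⟩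
  have hφeq : ∀ z : H →L[ℂ] H, φ z = φn z + φs z := by
    intro z; rw [hdec]; simp
  -- the key estimate
  have key : ∀ x ∈ M, ∀ y ∈ M, ∀ T : H →L[ℂ] H, ‖T‖ ≤ 1 →
      pNorm sf p x ≤ 1 → pNorm sf p y ≤ 1 →
      ‖φn (x * T * y)‖ ≤ BpNorm sf p φ ∧ ‖φs (x * T * y)‖ ≤ BpNorm sf p φ := by
    intro x hx y hy T hT hpx hpy
    have hbb : ∀ ε : ℝ, 0 < ε →
        ‖φn (x * T * y)‖ ≤ BpNorm sf p φ + 2*ε ∧ ‖φs (x * T * y)‖ ≤ BpNorm sf p φ + 2*ε := by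
      intro ε hε
      set x' := ContinuousLinearMap.adjoint x with hx'
      set a : ℕ → H := fun n => y (ξ n) with ha
      set b : ℕ → H := fun n => x' (η n) with hb
      have hsa : Summable fun n => ‖a n‖ ^ 2 := by
        refine Summable.of_nonneg_of_le (fun n => by positivity) (fun n => ?_)
          (hξ.mul_left (‖y‖^2))
        simp only [ha]
        nlinarith [y.le_opNorm (ξ n), norm_nonneg (y (ξ n)), norm_nonneg (ξ n), norm_nonneg y]
      have hsb : Summable fun n => ‖b n‖ ^ 2 := by
        refine Summable.of_nonneg_of_le (fun n => by positivity) (fun n => ?_)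
          (hη.mul_left (‖x'‖^2))
        simp only [hb]
        nlinarith [x'.le_opNorm (η n), norm_nonneg (x' (η n)), norm_nonneg (η n), norm_nonneg x']
      have hab : Summable fun n => ‖a n‖ * ‖b n‖ := aux_summable_mul hsa hsb
      obtain ⟨N, hN⟩ : ∃ N, (∑' k, ‖a (k + N)‖ * ‖b (k + N)‖) < ε :=
        ((tendsto_sum_nat_add (f := fun n => ‖a n‖ * ‖b n‖)).eventually_lt_const hε).exists
      obtain ⟨Q, hQc, hQ1, hQ1m, hQsym, hQa, hQb⟩ := aux_exists_proj a b N
      set g : ℕ → ℝ := fun n => if n < N then 0 else 2 * (‖a n‖ * ‖b n‖) with hg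
      have hgnn : ∀ n, 0 ≤ g n := by
        intro n
        by_cases h : n < N
        · simp [hg, h]
        · simp only [hg, h, if_false]
          positivity
      have hgsum : Summable g := by
        refine Summable.of_nonneg_of_le hgnn (fun n => ?_) (hab.mul_left 2)
        by_cases h : n < N
        · simp only [hg, h, if_true]
          positivity
        · simp [hg, h]
      have hgle : (∑' n, g n) ≤ 2 * ε := by
        rw [← Summable.sum_add_tsum_nat_add N hgsum]
        have h1 : (∑ i ∈ Finset.range N, g i) = 0 :=
          Finset.sum_eq_zero (fun i hi => by simp [hg, Finset.mem_range.mp hi])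
        have h2 : (∑' k, g (k + N)) = 2 * ∑' k, (‖a (k+N)‖ * ‖b (k+N)‖) := by
          rw [← tsum_mul_left]
          exact tsum_congr fun k => by simp [hg, Nat.not_lt.mpr (Nat.le_add_left N k)]
        rw [h1, h2, zero_add]
        linarith
      have hrep : ∀ S : H →L[ℂ] H,
          φn (x * S * y) = ∑' n, (inner ℂ (S (a n)) (b n) : ℂ) := by
        intro S
        rw [hφn]
        refine tsum_congr fun n => ?_
        simp only [ContinuousLinearMap.mul_apply, ha, hb, hx']
        exact (ContinuousLinearMap.adjoint_inner_right x (S (y (ξ n))) (η n)).symm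
      have hsummand : ∀ S : H →L[ℂ] H, Summable (fun n => (inner ℂ (S (a n)) (b n) : ℂ)) := by
        intro S
        refine Summable.of_norm (Summable.of_nonneg_of_le (fun n => norm_nonneg _) (fun n => ?_)
          (hab.mul_left ‖S‖))
        calc ‖(inner ℂ (S (a n)) (b n) : ℂ)‖ ≤ ‖S (a n)‖ * ‖b n‖ := norm_inner_le_norm _ _
          _ ≤ (‖S‖ * ‖a n‖) * ‖b n‖ := by gcongr; exact S.le_opNorm _
          _ = ‖S‖ * (‖a n‖ * ‖b n‖) := by ring
      have hbound : ∀ f : ℕ → ℂ, Summable f → (∀ n, ‖f n‖ ≤ g n) → ‖∑' n, f n‖ ≤ 2 * ε := by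
        intro f hf hfg
        have h1 : Summable fun n => ‖f n‖ :=
          Summable.of_nonneg_of_le (fun n => norm_nonneg _) hfg hgsum
        calc ‖∑' n, f n‖ ≤ ∑' n, ‖f n‖ := norm_tsum_le_tsum_norm h1
          _ ≤ ∑' n, g n := Summable.tsum_le_tsum hfg h1 hgsum
          _ ≤ 2 * ε := hgle
      have hmem : ∀ S : H →L[ℂ] H, ‖S‖ ≤ 1 → ‖φ (x * S * y)‖ ≤ BpNorm sf p φ := by
        intro S hS
        exact le_csSup hφ ⟨x, hx, y, hy, S, hS, hpx, hpy, rfl⟩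
      have hsing : ∀ z : H →L[ℂ] H, IsCompactOperator ⇑z → φn z = φ z := by
        intro z hz
        rw [hφeq z, hs z hz, add_zero]
      have hcmulL : ∀ (f g : H →L[ℂ] H), IsCompactOperator ⇑g → IsCompactOperator ⇑(f * g) := by
        intro f g hg
        have h := hg.continuous_comp f.continuous
        simpa [ContinuousLinearMap.mul_def, ContinuousLinearMap.coe_comp'] using h
      have hcmulR : ∀ (f g : H →L[ℂ] H), IsCompactOperator ⇑f → IsCompactOperator ⇑(f * g) := by
        intro f g hf
        have h := hf.comp_clm g
        simpa [ContinuousLinearMap.mul_def, ContinuousLinearMap.coe_comp'] using h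
      have hsand : ∀ S : H →L[ℂ] H, IsCompactOperator ⇑S → IsCompactOperator ⇑(x * S * y) :=
        fun S hS => hcmulR _ y (hcmulL x S hS)
      -- the normal part estimate
      set S₁ : H →L[ℂ] H := Q * T * Q with hS₁
      have hS₁c : IsCompactOperator ⇑S₁ := hcmulR _ Q (hcmulR Q T hQc)
      have hS₁n : ‖S₁‖ ≤ 1 := by
        refine ContinuousLinearMap.opNorm_le_bound _ zero_le_one (fun v => ?_)
        rw [one_mul]
        calc ‖S₁ v‖ = ‖Q (T (Q v))‖ := by rw [hS₁]; simp [ContinuousLinearMap.mul_apply]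
          _ ≤ ‖T (Q v)‖ := hQ1 _
          _ ≤ ‖T‖ * ‖Q v‖ := T.le_opNorm _
          _ ≤ 1 * ‖v‖ := mul_le_mul hT (hQ1 v) (norm_nonneg _) zero_le_one
          _ = ‖v‖ := one_mul _
      have hest₁ : ‖φn (x * T * y) - φn (x * S₁ * y)‖ ≤ 2 * ε := by
        rw [hrep T, hrep S₁, ← Summable.tsum_sub (hsummand T) (hsummand S₁)]
        refine hbound _ ((hsummand T).sub (hsummand S₁)) (fun n => ?_)
        by_cases h : n < N
        · have heq : (inner ℂ (S₁ (a n)) (b n) : ℂ) = inner ℂ (T (a n)) (b n) := by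
            calc (inner ℂ (S₁ (a n)) (b n) : ℂ) = inner ℂ (Q (T (Q (a n)))) (b n) := by
                  rw [hS₁]; simp [ContinuousLinearMap.mul_apply]
              _ = inner ℂ (T (Q (a n))) (Q (b n)) := hQsym _ _
              _ = inner ℂ (T (a n)) (b n) := by rw [hQa n h, hQb n h]
          simp [heq, hg, h]
        · have h1 : ‖(inner ℂ (T (a n)) (b n) : ℂ)‖ ≤ ‖a n‖ * ‖b n‖ := by
            have h2 : ‖T (a n)‖ ≤ ‖a n‖ := by
              nlinarith [T.le_opNorm (a n), norm_nonneg (a n)]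
            calc ‖(inner ℂ (T (a n)) (b n) : ℂ)‖ ≤ ‖T (a n)‖ * ‖b n‖ := norm_inner_le_norm _ _
              _ ≤ ‖a n‖ * ‖b n‖ := by gcongr
          have h2 : ‖(inner ℂ (S₁ (a n)) (b n) : ℂ)‖ ≤ ‖a n‖ * ‖b n‖ := by
            have hsv : ‖S₁ (a n)‖ ≤ ‖a n‖ := by
              nlinarith [S₁.le_opNorm (a n), norm_nonneg (a n), hS₁n]
            calc ‖(inner ℂ (S₁ (a n)) (b n) : ℂ)‖ ≤ ‖S₁ (a n)‖ * ‖b n‖ := norm_inner_le_norm _ _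
              _ ≤ ‖a n‖ * ‖b n‖ := by gcongr
          calc ‖(inner ℂ (T (a n)) (b n) : ℂ) - inner ℂ (S₁ (a n)) (b n)‖
              ≤ ‖(inner ℂ (T (a n)) (b n) : ℂ)‖ + ‖(inner ℂ (S₁ (a n)) (b n) : ℂ)‖ := norm_sub_le _ _
            _ ≤ 2 * (‖a n‖ * ‖b n‖) := by linarith
            _ = g n := by simp [hg, h]
      have h1 : ‖φn (x * T * y)‖ ≤ BpNorm sf p φ + 2 * ε := by
        have e := hsing (x * S₁ * y) (hsand S₁ hS₁c)
        have h2 := norm_sub_norm_le (φn (x*T*y)) (φn (x*S₁*y))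
        have h4 : ‖φn (x*S₁*y)‖ ≤ BpNorm sf p φ := by rw [e]; exact hmem S₁ hS₁n
        linarith [hest₁, h2, h4]
      -- the singular part estimate
      set P : H →L[ℂ] H := 1 - Q with hP
      have hPapp : ∀ v, P v = v - Q v := by
        intro v; rw [hP]; simp
      set S₂ : H →L[ℂ] H := P * T * P with hS₂
      have hS₂app : ∀ v, S₂ v = P (T (P v)) := by
        intro v; rw [hS₂]; simp [ContinuousLinearMap.mul_apply]
      have hS₂n : ‖S₂‖ ≤ 1 := by
        refine ContinuousLinearMap.opNorm_le_bound _ zero_le_one (fun v => ?_)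
        rw [one_mul]
        calc ‖S₂ v‖ = ‖P (T (P v))‖ := by rw [hS₂app]
          _ ≤ ‖T (P v)‖ := by rw [hPapp]; exact hQ1m _
          _ ≤ ‖T‖ * ‖P v‖ := T.le_opNorm _
          _ ≤ 1 * ‖v‖ := mul_le_mul hT (by rw [hPapp]; exact hQ1m v) (norm_nonneg _) zero_le_one
          _ = ‖v‖ := one_mul _
      have hdiffc : IsCompactOperator ⇑(x * T * y - x * S₂ * y) := by
        have hid : x * T * y - x * S₂ * y
            = x * (Q * T) * y + x * (T * Q) * y - x * (Q * T * Q) * y := by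
          rw [hS₂, hP]
          noncomm_ring
        rw [hid]
        have c1 := hsand (Q * T) (hcmulR Q T hQc)
        have c2 := hsand (T * Q) (hcmulL T Q hQc)
        have c3 := hsand (Q * T * Q) (hcmulR (Q*T) Q (hcmulR Q T hQc))
        have h := (c1.add c2).sub c3
        simpa [ContinuousLinearMap.coe_sub', ContinuousLinearMap.coe_add'] using h
      have hφs_eq : φs (x * T * y) = φs (x * S₂ * y) := by
        have h0 := hs _ hdiffc
        rw [map_sub] at h0
        exact sub_eq_zero.mp h0
      have hest₂ : ‖φn (x * S₂ * y)‖ ≤ 2 * ε := by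
        rw [hrep S₂]
        refine hbound _ (hsummand S₂) (fun n => ?_)
        by_cases h : n < N
        · have e1 : P (a n) = 0 := by rw [hPapp, hQa n h, sub_self]
          have e2 : S₂ (a n) = 0 := by rw [hS₂app, e1, map_zero, map_zero]
          simp [e2, hg, h]
        · have hsv : ‖S₂ (a n)‖ ≤ ‖a n‖ := by
            nlinarith [S₂.le_opNorm (a n), norm_nonneg (a n), hS₂n]
          calc ‖(inner ℂ (S₂ (a n)) (b n) : ℂ)‖ ≤ ‖S₂ (a n)‖ * ‖b n‖ := norm_inner_le_norm _ _
            _ ≤ ‖a n‖ * ‖b n‖ := by gcongr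
            _ ≤ 2 * (‖a n‖ * ‖b n‖) := by
                nlinarith [mul_nonneg (norm_nonneg (a n)) (norm_nonneg (b n))]
            _ = g n := by simp [hg, h]
      have h2 : ‖φs (x * T * y)‖ ≤ BpNorm sf p φ + 2 * ε := by
        rw [hφs_eq]
        have e : φs (x * S₂ * y) = φ (x * S₂ * y) - φn (x * S₂ * y) := by
          rw [hφeq (x * S₂ * y)]; ring
        rw [e]
        calc ‖φ (x*S₂*y) - φn (x*S₂*y)‖ ≤ ‖φ (x*S₂*y)‖ + ‖φn (x*S₂*y)‖ := norm_sub_le _ _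
          _ ≤ BpNorm sf p φ + 2*ε := add_le_add (hmem S₂ hS₂n) hest₂
      exact ⟨h1, h2⟩
    constructor
    · refine le_of_forall_pos_le_add fun ε hε => ?_
      have h := (hbb (ε/2) (by linarith)).1
      linarith
    · refine le_of_forall_pos_le_add fun ε hε => ?_
      have h := (hbb (ε/2) (by linarith)).2
      linarith
  have hubn : ∀ r ∈ dualSet sf p φn, r ≤ BpNorm sf p φ := by
    rintro r ⟨x, hx, y, hy, T, hT, hpx, hpy, rfl⟩
    exact (key x hx y hy T hT hpx hpy).1
  have hubs : ∀ r ∈ dualSet sf p φs, r ≤ BpNorm sf p φ := by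
    rintro r ⟨x, hx, y, hy, T, hT, hpx, hpy, rfl⟩
    exact (key x hx y hy T hT hpx hpy).2
  exact ⟨⟨⟨BpNorm sf p φ, fun r hr => hubn r hr⟩, csSup_le ⟨0, hzero φn⟩ hubn⟩,
    ⟨⟨BpNorm sf p φ, fun r hr => hubs r hr⟩, csSup_le ⟨0, hzero φs⟩ hubs⟩⟩
end
end

section
/- Let q = 2p/(p-2) and q' = 2p/(p+2) (the Hölder conjugate of q with respect to 2, i.e. 1/q + 1/q' = 1). If T ∈ B(L²M) satisfies |||T|||_p ≤ 1, then T maps the unit ball of L^qM into the unit ball of L^{q'}M; that is, ‖Tξ‖_{q'} ≤ |||T|||_p ‖ξ‖_q for all ξ ∈ L^qM ⊆ L²M. -/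
noncomputable section

variable {H : Type*} [NormedAddCommGroup H] [InnerProductSpace ℂ H] [CompleteSpace H]

variable {M : VonNeumannAlgebra H}

/-- The norm `|||T|||_p = sup {|φ(T)| : φ ∈ B^*(p), ‖φ‖_{B^*(p)} ≤ 1}`. -/
def tripNorm (sf : StandardForm M) (p : ℝ) (T : H →L[ℂ] H) : ℝ :=
  sSup {r | ∃ φ : (H →L[ℂ] H) →L[ℂ] ℂ, MemBp sf p φ ∧ BpNorm sf p φ ≤ 1 ∧ r = ‖φ T‖}

/-- The set of values `‖yξ‖₂` over `y ∈ M` with `‖y‖_p ≤ 1`; by the noncommutative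
Hölder inequality its supremum is the `L^q` norm `‖ξ‖_q` of the vector `ξ ∈ L²M`,
where `q = 2p/(p-2)` (i.e. `1/p + 1/q = 1/2`). -/
def vecLqSet (sf : StandardForm M) (p : ℝ) (ξ : H) : Set ℝ :=
  {r | ∃ y ∈ M, pNorm sf p y ≤ 1 ∧ r = ‖y ξ‖}

/-- `ξ ∈ L^qM`, for `q = 2p/(p-2)`. -/
def MemLq (sf : StandardForm M) (p : ℝ) (ξ : H) : Prop := BddAbove (vecLqSet sf p ξ)

/-- The norm `‖ξ‖_q` of a vector `ξ ∈ L^qM ⊆ L²M`, for `q = 2p/(p-2)`. -/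
def LqNorm (sf : StandardForm M) (p : ℝ) (ξ : H) : ℝ := sSup (vecLqSet sf p ξ)

/-- The norm `‖ζ‖_{q'}` of a vector `ζ ∈ L²M ⊆ L^{q'}M`, `q' = 2p/(p+2)`, given by
duality with `L^qM`, `q = 2p/(p-2)`:  `‖ζ‖_{q'} = sup {|⟨ζ, ξ⟩| : ξ ∈ L^qM, ‖ξ‖_q ≤ 1}`. -/
def LqDualNorm (sf : StandardForm M) (p : ℝ) (ζ : H) : ℝ :=
  sSup {r | ∃ ξ : H, MemLq sf p ξ ∧ LqNorm sf p ξ ≤ 1 ∧ r = ‖(inner ℂ ξ ζ : ℂ)‖}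

open scoped Polynomial

set_option linter.unusedVariables false
set_option linter.unusedSectionVars false

lemma SFtrace_comm (sf : StandardForm M) {x y : H →L[ℂ] H} (hx : x ∈ M) (hy : y ∈ M) :
    SFtrace sf (x * y) = SFtrace sf (y * x) := sf.tracial x hx y hy

lemma SFtrace_norm_le (sf : StandardForm M) (T : H →L[ℂ] H) : ‖SFtrace sf T‖ ≤ ‖T‖ := by
  calc ‖SFtrace sf T‖ ≤ ‖T sf.Ω‖ * ‖sf.Ω‖ := norm_inner_le_norm _ _
    _ ≤ ‖T‖ * ‖sf.Ω‖ * ‖sf.Ω‖ := by gcongr; exact T.le_opNorm _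
    _ = ‖T‖ := by rw [sf.norm_Ω]; ring

lemma my_mul_pow_mul (x y : H →L[ℂ] H) (n : ℕ) :
    (x * y) ^ (n + 1) = x * (y * x) ^ n * y := by
  induction n with
  | zero => simp [pow_succ]
  | succ n ih => rw [pow_succ, ih, pow_succ]; simp [mul_assoc]

lemma SFtrace_pow (sf : StandardForm M) {x : H →L[ℂ] H} (hx : x ∈ M) (n : ℕ) :
    SFtrace sf ((x * star x) ^ (n + 1)) = SFtrace sf ((star x * x) ^ (n + 1)) := by
  have h1 : (x * star x) ^ (n + 1) = x * ((star x * x) ^ n * star x) := by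
    rw [my_mul_pow_mul, mul_assoc]
  have h2 : ((star x * x) ^ n * star x) * x = (star x * x) ^ (n + 1) := by
    rw [pow_succ, mul_assoc]
  rw [h1, SFtrace_comm sf hx (mul_mem (pow_mem (mul_mem (star_mem hx) hx) n) (star_mem hx)), h2]

lemma SFtrace_aeval (sf : StandardForm M) {x : H →L[ℂ] H} (hx : x ∈ M) (P : ℝ[X]) :
    SFtrace sf (Polynomial.aeval (x * star x) P) = SFtrace sf (Polynomial.aeval (star x * x) P) := by
  induction P using Polynomial.induction_on' with
  | add p q hp hq =>
      simp only [map_add]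
      simp only [SFtrace, ContinuousLinearMap.add_apply, inner_add_left] at *
      rw [hp, hq]
  | monomial n c =>
      simp only [Polynomial.aeval_monomial]
      have key : SFtrace sf ((x * star x) ^ n) = SFtrace sf ((star x * x) ^ n) := by
        cases n with
        | zero => simp
        | succ n => exact SFtrace_pow sf hx n
      have hsm : ∀ (T : H →L[ℂ] H), algebraMap ℝ (H →L[ℂ] H) c * T = c • T := by
        intro T; rw [Algebra.smul_def]
      have hs : ∀ T : H →L[ℂ] H, SFtrace sf (c • T) = c * SFtrace sf T := by
        intro T
        simp only [SFtrace, ContinuousLinearMap.smul_apply]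
        rw [← Complex.coe_smul, inner_smul_left]; simp
      rw [hsm, hsm, hs, hs, key]

lemma SFtrace_cfc_comm (sf : StandardForm M) {x : H →L[ℂ] H} (hx : x ∈ M)
    (f : ℝ → ℝ) (hf : Continuous f) :
    SFtrace sf (cfc f (x * star x)) = SFtrace sf (cfc f (star x * x)) := by
  set b : H →L[ℂ] H := x * star x with hbdef
  set a : H →L[ℂ] H := star x * x with hadef
  have hb : IsSelfAdjoint b := IsSelfAdjoint.mul_star_self x
  have ha : IsSelfAdjoint a := IsSelfAdjoint.star_mul_self x
  set R : ℝ := max (‖a‖ * ‖(1 : H →L[ℂ] H)‖) (‖b‖ * ‖(1 : H →L[ℂ] H)‖) with hR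
  have hspec_a : spectrum ℝ a ⊆ Set.Icc (-R) R := by
    intro t ht
    have := spectrum.norm_le_norm_mul_of_mem ht
    rw [Real.norm_eq_abs] at this
    exact abs_le.mp (this.trans (le_max_left _ _))
  have hspec_b : spectrum ℝ b ⊆ Set.Icc (-R) R := by
    intro t ht
    have := spectrum.norm_le_norm_mul_of_mem ht
    rw [Real.norm_eq_abs] at this
    exact abs_le.mp (this.trans (le_max_right _ _))
  apply eq_of_forall_dist_le
  intro ε hε
  obtain ⟨P, hP⟩ := exists_polynomial_near_of_continuousOn (-R) R f hf.continuousOn (ε/2)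
    (by positivity)
  have hpe : Continuous fun t : ℝ => P.eval t := P.continuous_aeval
  have key : ∀ (c : H →L[ℂ] H), IsSelfAdjoint c → spectrum ℝ c ⊆ Set.Icc (-R) R →
      ‖SFtrace sf (cfc f c) - SFtrace sf (Polynomial.aeval c P)‖ ≤ ε / 2 := by
    intro c hc hspec
    have h1 : SFtrace sf (cfc f c) - SFtrace sf (Polynomial.aeval c P)
        = SFtrace sf (cfc f c - Polynomial.aeval c P) := by
      simp [SFtrace, ContinuousLinearMap.sub_apply, inner_sub_left]
    rw [h1, ← cfc_polynomial P c, ← cfc_sub f (fun t => P.eval t) c]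
    refine (SFtrace_norm_le sf _).trans ?_
    refine norm_cfc_le (by positivity) ?_
    intro t ht
    have := hP t (hspec ht)
    rw [Real.norm_eq_abs, abs_sub_comm]
    exact this.le
  have hmid : SFtrace sf (Polynomial.aeval b P) = SFtrace sf (Polynomial.aeval a P) :=
    SFtrace_aeval sf hx P
  rw [dist_eq_norm]
  calc ‖SFtrace sf (cfc f b) - SFtrace sf (cfc f a)‖
      = ‖(SFtrace sf (cfc f b) - SFtrace sf (Polynomial.aeval b P))
          - (SFtrace sf (cfc f a) - SFtrace sf (Polynomial.aeval a P))‖ := by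
        rw [hmid]; ring_nf
    _ ≤ ‖SFtrace sf (cfc f b) - SFtrace sf (Polynomial.aeval b P)‖
        + ‖SFtrace sf (cfc f a) - SFtrace sf (Polynomial.aeval a P)‖ := norm_sub_le _ _
    _ ≤ ε / 2 + ε / 2 := add_le_add (key b hb hspec_b) (key a ha hspec_a)
    _ = ε := by ring

lemma cont_rpow {p : ℝ} (hp : 2 ≤ p) : Continuous (fun t : ℝ => t ^ (p / 2)) := by
  rw [continuous_iff_continuousAt]
  exact fun t => Real.continuousAt_rpow_const t (p / 2) (Or.inr (by linarith))

lemma pNorm_star (sf : StandardForm M) {p : ℝ} (hp : 2 ≤ p) {x : H →L[ℂ] H} (hx : x ∈ M) :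
    pNorm sf p (star x) = pNorm sf p x := by
  unfold pNorm
  rw [star_star]
  rw [SFtrace_cfc_comm sf hx _ (cont_rpow hp)]

lemma pNorm_one (sf : StandardForm M) {p : ℝ} (hp : 2 ≤ p) : pNorm sf p (1 : H →L[ℂ] H) = 1 := by
  unfold pNorm
  rw [star_one, one_mul, cfc_apply_one]
  have : ((1 : ℝ) ^ (p / 2)) = 1 := Real.one_rpow _
  rw [this, map_one]
  have h1 : SFtrace sf (1 : H →L[ℂ] H) = 1 := by
    simp [SFtrace, inner_self_eq_norm_sq_to_K, sf.norm_Ω]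
  rw [h1]
  simp [Real.one_rpow]

lemma norm_apply_le_LqNorm (sf : StandardForm M) {p : ℝ} {ξ : H} (hξ : MemLq sf p ξ)
    {y : H →L[ℂ] H} (hy : y ∈ M) (hyp : pNorm sf p y ≤ 1) : ‖y ξ‖ ≤ LqNorm sf p ξ :=
  le_csSup hξ ⟨y, hy, hyp, rfl⟩

lemma norm_le_LqNorm (sf : StandardForm M) {p : ℝ} (hp : 2 ≤ p) {ξ : H} (hξ : MemLq sf p ξ) :
    ‖ξ‖ ≤ LqNorm sf p ξ := by
  have := norm_apply_le_LqNorm sf hξ (one_mem M) (le_of_eq (pNorm_one sf hp))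
  simpa using this

lemma LqNorm_nonneg (sf : StandardForm M) {p : ℝ} (hp : 2 ≤ p) {ξ : H} (hξ : MemLq sf p ξ) :
    0 ≤ LqNorm sf p ξ := (norm_nonneg ξ).trans (norm_le_LqNorm sf hp hξ)

lemma tripSet_bddAbove (sf : StandardForm M) {p : ℝ} (hp : 2 ≤ p) (T : H →L[ℂ] H) :
    BddAbove {r | ∃ φ : (H →L[ℂ] H) →L[ℂ] ℂ, MemBp sf p φ ∧ BpNorm sf p φ ≤ 1 ∧ r = ‖φ T‖} := by
  refine ⟨‖T‖, ?_⟩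
  rintro r ⟨φ, hφ, hφ1, rfl⟩
  by_cases hT : T = 0
  · simp [hT, norm_nonneg]
  · have hTn : (0 : ℝ) < ‖T‖ := norm_pos_iff.mpr hT
    set S : H →L[ℂ] H := ‖T‖⁻¹ • T with hS
    have hSnorm : ‖S‖ ≤ 1 := by
      rw [hS, norm_smul, norm_inv, norm_norm, inv_mul_cancel₀ hTn.ne']
    have hmem : ‖φ (1 * S * 1)‖ ∈ dualSet sf p φ :=
      ⟨1, one_mem M, 1, one_mem M, S, hSnorm, le_of_eq (pNorm_one sf hp),
        le_of_eq (pNorm_one sf hp), rfl⟩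
    have hle : ‖φ (1 * S * 1)‖ ≤ BpNorm sf p φ := le_csSup hφ hmem
    have h1 : (1 : H →L[ℂ] H) * S * 1 = S := by rw [one_mul, mul_one]
    rw [h1] at hle
    have hφS : ‖φ S‖ = ‖T‖⁻¹ * ‖φ T‖ := by
      rw [hS, ← Complex.coe_smul, map_smul, norm_smul]
      simp
    have := hle.trans hφ1
    rw [hφS] at this
    calc ‖φ T‖ = ‖T‖ * (‖T‖⁻¹ * ‖φ T‖) := by field_simp
      _ ≤ ‖T‖ * 1 := by gcongr
      _ = ‖T‖ := mul_one _

lemma tripNorm_nonneg (sf : StandardForm M) {p : ℝ} (hp : 2 ≤ p) (T : H →L[ℂ] H) :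
    0 ≤ tripNorm sf p T := by
  have h0 : MemBp sf p (0 : (H →L[ℂ] H) →L[ℂ] ℂ) := by
    refine ⟨0, ?_⟩
    rintro r ⟨x, hx, y, hy, S, hS, hxp, hyp, rfl⟩
    simp
  have hB : BpNorm sf p (0 : (H →L[ℂ] H) →L[ℂ] ℂ) ≤ 1 := by
    apply Real.sSup_le _ zero_le_one
    rintro r ⟨x, hx, y, hy, S, hS, hxp, hyp, rfl⟩
    simp
  have hmem : (0 : ℝ) ∈ {r | ∃ φ : (H →L[ℂ] H) →L[ℂ] ℂ,
      MemBp sf p φ ∧ BpNorm sf p φ ≤ 1 ∧ r = ‖φ T‖} := ⟨0, h0, hB, by simp⟩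
  exact le_csSup (tripSet_bddAbove sf hp T) hmem


/-- If `T ∈ B(L²M)`, then `T` maps `L^qM` to `L^{q'}M` with
`‖Tξ‖_{q'} ≤ |||T|||_p ‖ξ‖_q` for all `ξ ∈ L^qM` (so if `|||T|||_p ≤ 1` it maps the
unit ball of `L^qM` into the unit ball of `L^{q'}M`). -/
theorem tripNorm_Lq_to_Lq' (sf : StandardForm M) (p : ℝ) (hp : 2 ≤ p)
    (T : H →L[ℂ] H) (ξ : H) (hξ : MemLq sf p ξ) :
    LqDualNorm sf p (T ξ) ≤ tripNorm sf p T * LqNorm sf p ξ := by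
  have hLq0 : 0 ≤ LqNorm sf p ξ := LqNorm_nonneg sf hp hξ
  refine Real.sSup_le ?_ (mul_nonneg (tripNorm_nonneg sf hp T) hLq0)
  rintro r ⟨η, hη, hη1, rfl⟩
  set φ : (H →L[ℂ] H) →L[ℂ] ℂ :=
    (innerSL ℂ η).comp (ContinuousLinearMap.apply ℂ H ξ) with hφdef
  have hφ_apply : ∀ S : H →L[ℂ] H, φ S = inner ℂ η (S ξ) := fun S => rfl
  have key : ∀ s ∈ dualSet sf p φ, s ≤ LqNorm sf p ξ := by
    rintro s ⟨x, hx, y, hy, S, hS, hxp, hyp, rfl⟩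
    have h1 : φ (x * S * y) = inner ℂ ((star x) η) (S (y ξ)) := by
      rw [hφ_apply, ContinuousLinearMap.mul_apply, ContinuousLinearMap.mul_apply,
        ContinuousLinearMap.star_eq_adjoint, ContinuousLinearMap.adjoint_inner_left]
    have hxη : ‖(star x) η‖ ≤ 1 :=
      (norm_apply_le_LqNorm sf hη (star_mem hx)
        (by rw [pNorm_star sf hp hx]; exact hxp)).trans hη1
    have hSy : ‖S (y ξ)‖ ≤ ‖y ξ‖ :=
      (S.le_opNorm _).trans (mul_le_of_le_one_left (norm_nonneg _) hS)
    have hyξ : ‖y ξ‖ ≤ LqNorm sf p ξ := norm_apply_le_LqNorm sf hξ hy hyp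
    rw [h1]
    calc ‖(inner ℂ ((star x) η) (S (y ξ)) : ℂ)‖ ≤ ‖(star x) η‖ * ‖S (y ξ)‖ :=
          norm_inner_le_norm _ _
      _ ≤ 1 * LqNorm sf p ξ :=
          mul_le_mul hxη (hSy.trans hyξ) (norm_nonneg _) zero_le_one
      _ = LqNorm sf p ξ := one_mul _
  by_cases hz : LqNorm sf p ξ = 0
  · have hξ0 : ξ = 0 := norm_eq_zero.mp
      (le_antisymm (hz ▸ norm_le_LqNorm sf hp hξ) (norm_nonneg _))
    have hTξ : T ξ = 0 := by rw [hξ0, map_zero]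
    rw [hTξ]
    simp only [inner_zero_right, norm_zero]
    exact mul_nonneg (tripNorm_nonneg sf hp T) hLq0
  · have hpos : 0 < LqNorm sf p ξ := lt_of_le_of_ne hLq0 (Ne.symm hz)
    set c : ℝ := (LqNorm sf p ξ)⁻¹ with hc
    have hc0 : 0 ≤ c := inv_nonneg.mpr hLq0
    set φ' : (H →L[ℂ] H) →L[ℂ] ℂ := (c : ℂ) • φ with hφ'
    have hφ'app : ∀ S : H →L[ℂ] H, ‖φ' S‖ = c * ‖φ S‖ := by
      intro S
      rw [hφ', ContinuousLinearMap.smul_apply, norm_smul, Complex.norm_real,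
        Real.norm_of_nonneg hc0]
    have hdual' : ∀ s ∈ dualSet sf p φ', s ≤ 1 := by
      rintro s ⟨x, hx, y, hy, S, hS, hxp, hyp, rfl⟩
      have h2 : ‖φ (x * S * y)‖ ≤ LqNorm sf p ξ := key _ ⟨x, hx, y, hy, S, hS, hxp, hyp, rfl⟩
      rw [hφ'app]
      calc c * ‖φ (x * S * y)‖ ≤ c * LqNorm sf p ξ := by gcongr
        _ = 1 := inv_mul_cancel₀ hz
    have hMem' : MemBp sf p φ' := ⟨1, hdual'⟩
    have hBp' : BpNorm sf p φ' ≤ 1 := Real.sSup_le hdual' zero_le_one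
    have htrip : ‖φ' T‖ ≤ tripNorm sf p T :=
      le_csSup (tripSet_bddAbove sf hp T) ⟨φ', hMem', hBp', rfl⟩
    have hr : ‖(inner ℂ η (T ξ) : ℂ)‖ = LqNorm sf p ξ * ‖φ' T‖ := by
      rw [hφ'app, ← hφ_apply T, hc]
      field_simp
    rw [hr, mul_comm (tripNorm sf p T)]
    gcongr
end
end

section
/- Let {uₙ}ₙ ⊂ U(M) be unitaries with τ(uₙ*uₘ) = 0 for n ≠ m, let H₀ = closed span{ûₙ} ⊆ L²M, and let E₀(T) denote the operator acting as 0 on H₀^⊥ and diagonally on H₀ by E₀(T)ûₙ = ⟨T ûₙ, ûₙ⟩ ûₙ. Then |||E₀(T)|||_p ≤ |||T|||_p for all T ∈ B(L²M); moreover, if T is diagonal with respect to {ûₙ} and vanishes on H₀^⊥, then |||T|||_p = ‖T‖. -/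
noncomputable section

variable {H : Type*} [NormedAddCommGroup H] [InnerProductSpace ℂ H] [CompleteSpace H]

variable {M : VonNeumannAlgebra H}

lemma TN15_sq_le {a b : ℝ} (ha : 0 ≤ a) (hb : 0 ≤ b) (h : a ^ 2 ≤ b ^ 2) : a ≤ b := by
  nlinarith

lemma TN15_norm_sum_sq {e : ℕ → H} (he : Orthonormal ℂ e) (s : Finset ℕ) (l : ℕ → ℂ) :
    ‖∑ i ∈ s, l i • e i‖ ^ 2 = ∑ i ∈ s, ‖l i‖ ^ 2 := by
  have h := he.inner_sum l l s
  rw [norm_sq_eq_re_inner (𝕜 := ℂ), h]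
  rw [map_sum]
  refine Finset.sum_congr rfl fun i _ => ?_
  rw [RCLike.conj_mul]
  simp [← Complex.ofReal_pow]

lemma TN15_opnorm_le (e : ℕ → H) (he : Orthonormal ℂ e) (D : H →L[ℂ] H) (d : ℕ → ℂ)
    (hD1 : ∀ n, D (e n) = d n • e n)
    (hD0 : ∀ ζ : H, (∀ n, (inner ℂ (e n) ζ : ℂ) = 0) → D ζ = 0)
    (C : ℝ) (hC : 0 ≤ C) (hdC : ∀ n, ‖d n‖ ≤ C) : ‖D‖ ≤ C := by
  set K := (Submodule.span ℂ (Set.range e)).topologicalClosure with hK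
  haveI : CompleteSpace K := (Submodule.isClosed_topologicalClosure _).completeSpace_coe
  have claim1 : ∀ η ∈ Submodule.span ℂ (Set.range e), ‖D η‖ ≤ C * ‖η‖ := by
    intro η hη
    rw [Finsupp.mem_span_range_iff_exists_finsupp] at hη
    obtain ⟨c, rfl⟩ := hη
    rw [Finsupp.sum]
    have hDsum : D (∑ i ∈ c.support, c i • e i) = ∑ i ∈ c.support, (c i * d i) • e i := by
      rw [map_sum]
      exact Finset.sum_congr rfl fun i _ => by rw [map_smul, hD1, smul_smul]
    rw [hDsum]
    have h1 := TN15_norm_sum_sq he c.support (fun i => c i * d i)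
    have h2 := TN15_norm_sum_sq he c.support (fun i => c i)
    refine TN15_sq_le (norm_nonneg _) (mul_nonneg hC (norm_nonneg _)) ?_
    rw [mul_pow, h1, h2, Finset.mul_sum]
    refine Finset.sum_le_sum fun i _ => ?_
    rw [norm_mul, mul_pow]
    have h3 : ‖d i‖ ^ 2 ≤ C ^ 2 := by nlinarith [norm_nonneg (d i), hdC i]
    nlinarith [mul_nonneg (sq_nonneg (‖c i‖)) (sub_nonneg.mpr h3)]
  have hclosed : IsClosed {x : H | ‖D x‖ ≤ C * ‖x‖} :=
    isClosed_le (D.continuous.norm) (continuous_const.mul continuous_norm)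
  have claim2 : ∀ η ∈ K, ‖D η‖ ≤ C * ‖η‖ := by
    intro η hη
    have h1 : (Submodule.span ℂ (Set.range e) : Set H) ⊆ {x : H | ‖D x‖ ≤ C * ‖x‖} := claim1
    have h2 : (K : Set H) ⊆ {x : H | ‖D x‖ ≤ C * ‖x‖} := by
      rw [hK, Submodule.topologicalClosure_coe]
      exact hclosed.closure_subset_iff.mpr h1
    exact h2 hη
  refine D.opNorm_le_bound hC fun ζ => ?_
  set ζ₀ : H := (Submodule.orthogonalProjection K ζ : H) with hζ₀
  have hperp : ζ - ζ₀ ∈ Kᗮ := K.sub_starProjection_mem_orthogonal ζ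
  have heK : ∀ n, e n ∈ K := fun n =>
    Submodule.le_topologicalClosure _ (Submodule.subset_span ⟨n, rfl⟩)
  have hz : D (ζ - ζ₀) = 0 :=
    hD0 _ fun n => (Submodule.mem_orthogonal K (ζ - ζ₀)).mp hperp (e n) (heK n)
  have hDζ : D ζ = D ζ₀ := by
    have h := map_sub D ζ ζ₀
    rw [hz] at h
    exact sub_eq_zero.mp h.symm
  rw [hDζ]
  calc ‖D ζ₀‖ ≤ C * ‖ζ₀‖ := claim2 ζ₀ (SetLike.coe_mem _)
    _ ≤ C * ‖ζ‖ := by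
      refine mul_le_mul_of_nonneg_left ?_ hC
      calc ‖ζ₀‖ = ‖Submodule.orthogonalProjection K ζ‖ := rfl
        _ ≤ ‖Submodule.orthogonalProjection K‖ * ‖ζ‖ := (Submodule.orthogonalProjection K).le_opNorm ζ
        _ ≤ 1 * ‖ζ‖ := mul_le_mul_of_nonneg_right (Submodule.orthogonalProjection_norm_le K) (norm_nonneg ζ)
        _ = ‖ζ‖ := one_mul _

lemma TN15_tau_nonneg (sf : StandardForm M) {a : H →L[ℂ] H} (ha : 0 ≤ a) :
    0 ≤ (SFtrace sf a).re := by
  rw [ContinuousLinearMap.nonneg_iff_isPositive] at ha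
  exact ha.re_inner_nonneg_left sf.Ω

lemma TN15_tau_mono (sf : StandardForm M) {a b : H →L[ℂ] H} (hab : a ≤ b) :
    (SFtrace sf a).re ≤ (SFtrace sf b).re := by
  have h := TN15_tau_nonneg sf (sub_nonneg.mpr hab)
  have h2 : SFtrace sf (b - a) = SFtrace sf b - SFtrace sf a := by
    simp [SFtrace, inner_sub_left]
  rw [h2, Complex.sub_re] at h
  linarith

lemma TN15_normsq (sf : StandardForm M) (y : H →L[ℂ] H) :
    (SFtrace sf (star y * y)).re = ‖y sf.Ω‖ ^ 2 := by
  have h : SFtrace sf (star y * y) = inner ℂ (y sf.Ω) (y sf.Ω) := by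
    rw [SFtrace, ContinuousLinearMap.mul_apply, ContinuousLinearMap.star_eq_adjoint,
      ContinuousLinearMap.adjoint_inner_left]
  rw [h]
  exact (norm_sq_eq_re_inner (𝕜 := ℂ) _).symm

lemma TN15_tangent {q c t : ℝ} (hq : 1 ≤ q) (hc : 0 ≤ c) (ht : 0 ≤ t) :
    c ^ q + q * c ^ (q - 1) * (t - c) ≤ t ^ q := by
  rcases eq_or_lt_of_le hc with hc0 | hc0
  · rcases eq_or_lt_of_le hq with hq1 | hq1
    · rw [← hc0, ← hq1]
      simp [Real.rpow_one]
    · have h1 : (0:ℝ) ^ q = 0 := Real.zero_rpow (by linarith)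
      have h2 : (0:ℝ) ^ (q-1) = 0 := Real.zero_rpow (by linarith)
      rw [← hc0, h1, h2]
      simpa using Real.rpow_nonneg ht q
  · have hs : (-1:ℝ) ≤ t / c - 1 := by
      have : 0 ≤ t / c := div_nonneg ht hc0.le
      linarith
    have hber := one_add_mul_self_le_rpow_one_add hs hq
    have h1s : 1 + (t / c - 1) = t / c := by ring
    rw [h1s, Real.div_rpow ht hc0.le] at hber
    set A := c ^ q with hA
    set B := c ^ (q-1) with hB
    have hApos : 0 < A := Real.rpow_pos_of_pos hc0 q
    have hAB : B * c = A := by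
      rw [hA, hB, ← Real.rpow_add_one (ne_of_gt hc0) (q-1)]
      norm_num
    have hber2 : A * (1 + q * (t/c - 1)) ≤ t ^ q := by
      have := mul_le_mul_of_nonneg_left hber hApos.le
      rwa [mul_div_cancel₀ _ (ne_of_gt hApos)] at this
    have h1 : A * (t / c) = B * t := by
      rw [← hAB]
      field_simp
    have expand : A * (1 + q * (t/c - 1)) = A + q * B * (t - c) := by
      linear_combination q * h1 + q * hAB
    linarith [expand ▸ hber2]

lemma TN15_jensen (sf : StandardForm M) {q : ℝ} (hq : 1 ≤ q) {a : H →L[ℂ] H} (ha : 0 ≤ a) :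
    ((SFtrace sf a).re) ^ q ≤ (SFtrace sf (cfc (fun t : ℝ => t ^ q) a)).re := by
  set c := (SFtrace sf a).re with hc
  have hc0 : 0 ≤ c := TN15_tau_nonneg sf ha
  have hsa : IsSelfAdjoint a := IsSelfAdjoint.of_nonneg ha
  set α := c ^ q - q * c ^ (q - 1) * c with hα
  set β := q * c ^ (q - 1) with hβ
  have hcont : ContinuousOn (fun t : ℝ => t ^ q) (spectrum ℝ a) := fun x _ =>
    (Real.continuousAt_rpow_const x q (Or.inr (by linarith))).continuousWithinAt
  have hle : cfc (fun t : ℝ => α + β * t) a ≤ cfc (fun t : ℝ => t ^ q) a := by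
    refine cfc_mono (fun t ht => ?_) (by fun_prop) hcont
    have ht0 : 0 ≤ t := spectrum_nonneg_of_nonneg ha ht
    have h := TN15_tangent hq hc0 ht0
    rw [hα, hβ]
    nlinarith [h]
  have heq : cfc (fun t : ℝ => α + β * t) a = α • (1 : H →L[ℂ] H) + β • a := by
    rw [cfc_add a (fun _ => α) (fun t => β * t), cfc_const α a, cfc_const_mul β _ a,
      cfc_id' ℝ a, Algebra.algebraMap_eq_smul_one]
  have hmono := TN15_tau_mono sf hle
  rw [heq] at hmono
  have hΩ : (inner ℂ sf.Ω sf.Ω : ℂ) = 1 := by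
    rw [inner_self_eq_norm_sq_to_K, sf.norm_Ω]
    norm_num
  have hcomp : (SFtrace sf (α • (1 : H →L[ℂ] H) + β • a)).re = α + β * c := by
    simp only [SFtrace, ContinuousLinearMap.add_apply, ContinuousLinearMap.smul_apply,
      ContinuousLinearMap.one_apply, inner_add_left, inner_smul_real_left, hΩ]
    rw [RCLike.real_smul_eq_coe_smul (K := ℂ) α, RCLike.real_smul_eq_coe_smul (K := ℂ) β,
      inner_smul_left, inner_smul_left, hΩ]
    simp [Complex.conj_ofReal, Complex.mul_re, hc, SFtrace]
  rw [hcomp] at hmono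
  have : α + β * c = c ^ q := by rw [hα, hβ]; ring
  linarith [this ▸ hmono]

lemma TN15_L2le (sf : StandardForm M) {p : ℝ} (hp : 2 ≤ p) (y : H →L[ℂ] H)
    (hy : pNorm sf p y ≤ 1) : ‖y sf.Ω‖ ≤ 1 := by
  have hq : 1 ≤ p / 2 := by linarith
  set a := star y * y with ha'
  have ha : 0 ≤ a := star_mul_self_nonneg y
  rw [pNorm, ← ha'] at hy
  set R := (SFtrace sf (cfc (fun t : ℝ => t ^ (p/2)) a)).re with hR
  have hR0 : 0 ≤ R := TN15_tau_nonneg sf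
    (cfc_nonneg fun x hx => Real.rpow_nonneg (spectrum_nonneg_of_nonneg ha hx) _)
  have hR1 : R ≤ 1 := by
    by_contra hcon
    push_neg at hcon
    have h1 : (1:ℝ) < R ^ (1/p) :=
      (Real.one_lt_rpow_iff_of_pos (by linarith)).mpr (Or.inl ⟨hcon, by positivity⟩)
    linarith
  have hjen := TN15_jensen sf hq ha
  have hns := TN15_normsq sf y
  set c := (SFtrace sf a).re with hc
  have hc0 : 0 ≤ c := TN15_tau_nonneg sf ha
  have hcle : c ≤ 1 := by
    by_contra hcon
    push_neg at hcon
    have h1 : (1:ℝ) < c ^ (p/2) :=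
      (Real.one_lt_rpow_iff_of_pos (by linarith)).mpr (Or.inl ⟨hcon, by linarith⟩)
    linarith
  nlinarith [norm_nonneg (y sf.Ω)]

lemma TN15_shift (sf : StandardForm M) {z w : H →L[ℂ] H} (hz : z ∈ M) (hw : w ∈ M)
    (hw2 : w * star w = 1) : ‖z (w sf.Ω)‖ = ‖z sf.Ω‖ := by
  have h1 : (SFtrace sf (star (z * w) * (z * w))).re = ‖z (w sf.Ω)‖ ^ 2 := by
    have h := TN15_normsq sf (z * w)
    rwa [ContinuousLinearMap.mul_apply] at h
  have h2 : SFtrace sf (star (z * w) * (z * w)) = SFtrace sf (star z * z) := by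
    have htr := sf.tracial (star w * (star z * z)) (mul_mem (star_mem hw) (mul_mem (star_mem hz) hz))
      w hw
    have e1 : star (z * w) * (z * w) = star w * (star z * z) * w := by
      rw [star_mul]; noncomm_ring
    have e2 : w * (star w * (star z * z)) = star z * z := by
      rw [← mul_assoc, hw2, one_mul]
    rw [e1, SFtrace, SFtrace, htr, e2]
  have h3 := TN15_normsq sf z
  rw [h2, h3] at h1
  have := norm_nonneg (z (w sf.Ω))
  have := norm_nonneg (z sf.Ω)
  nlinarith

lemma TN15_star_norm (sf : StandardForm M) {z : H →L[ℂ] H} (hz : z ∈ M) :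
    ‖(star z) sf.Ω‖ = ‖z sf.Ω‖ := by
  have h := sf.tracial z hz (star z) (star_mem hz)
  have h1 := TN15_normsq sf (star z)
  rw [star_star] at h1
  have h2 := TN15_normsq sf z
  have h3 : (SFtrace sf (z * star z)).re = (SFtrace sf (star z * z)).re := by
    rw [SFtrace, SFtrace, h]
  rw [h3, h2] at h1
  have := norm_nonneg ((star z) sf.Ω)
  have := norm_nonneg (z sf.Ω)
  nlinarith

lemma TN15_orth (sf : StandardForm M) (u : ℕ → H →L[ℂ] H)
    (huU1 : ∀ n, star (u n) * u n = 1)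
    (horth : ∀ m n, m ≠ n → SFtrace sf (star (u n) * u m) = 0) :
    Orthonormal ℂ (fun n => (u n) sf.Ω) := by
  rw [orthonormal_iff_ite]
  intro m n
  have key : (inner ℂ ((u m) sf.Ω) ((u n) sf.Ω) : ℂ) = SFtrace sf (star (u n) * u m) := by
    rw [SFtrace, ContinuousLinearMap.mul_apply, ContinuousLinearMap.star_eq_adjoint,
      ContinuousLinearMap.adjoint_inner_left]
  rw [key]
  by_cases hmn : m = n
  · subst hmn
    rw [huU1 m]
    simp only [if_pos rfl]
    have : ((1 : H →L[ℂ] H) : H →L[ℂ] H) sf.Ω = sf.Ω := rfl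
    rw [SFtrace, this, inner_self_eq_norm_sq_to_K, sf.norm_Ω]
    norm_num
  · rw [horth m n hmn, if_neg hmn]

lemma TN15_nontrivial_H (sf : StandardForm M) : Nontrivial H :=
  ⟨⟨sf.Ω, 0, fun h => by simpa [h] using sf.norm_Ω⟩⟩

lemma TN15_pNorm_one (sf : StandardForm M) {p : ℝ} (hp : 2 ≤ p) :
    pNorm sf p (1 : H →L[ℂ] H) ≤ 1 := by
  haveI := TN15_nontrivial_H sf
  haveI : Nontrivial (H →L[ℂ] H) := by
    refine ⟨⟨1, 0, fun h => ?_⟩⟩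
    have h2 := congrArg (fun S : H →L[ℂ] H => S sf.Ω) h
    simp only [ContinuousLinearMap.one_apply, ContinuousLinearMap.zero_apply] at h2
    simpa [h2] using sf.norm_Ω
  rw [pNorm]
  have h1 : star (1 : H →L[ℂ] H) * 1 = 1 := by simp
  rw [h1]
  have hcfc : cfc (fun t : ℝ => t ^ (p/2)) (1 : H →L[ℂ] H) = 1 := by
    have hco : cfc (fun t : ℝ => t ^ (p/2)) (1 : H →L[ℂ] H)
        = cfc (fun _ : ℝ => (1:ℝ)) (1 : H →L[ℂ] H) := by
      refine cfc_congr fun x hx => ?_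
      rw [spectrum.one_eq] at hx
      simp only [Set.mem_singleton_iff] at hx
      subst hx
      exact Real.one_rpow _
    rw [hco, cfc_const 1 _, map_one]
  rw [hcfc]
  have hΩ : (SFtrace sf 1).re = 1 := by
    rw [SFtrace]
    have : ((1 : H →L[ℂ] H) : H →L[ℂ] H) sf.Ω = sf.Ω := rfl
    rw [this, inner_self_eq_norm_sq_to_K, sf.norm_Ω]
    norm_num
  rw [hΩ, Real.one_rpow]

lemma TN15_elt_le (sf : StandardForm M) {p : ℝ} (hp : 2 ≤ p) (S : H →L[ℂ] H)
    {φ : (H →L[ℂ] H) →L[ℂ] ℂ} (hφ : MemBp sf p φ) (hφ1 : BpNorm sf p φ ≤ 1) :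
    ‖φ S‖ ≤ ‖S‖ := by
  rcases eq_or_ne S 0 with rfl | hS
  · simp
  have hS0 : 0 < ‖S‖ := norm_pos_iff.mpr hS
  have hmem : ‖S‖⁻¹ * ‖φ S‖ ∈ dualSet sf p φ := by
    refine ⟨1, one_mem M, 1, one_mem M, ((‖S‖⁻¹ : ℝ) : ℂ) • S, ?_, TN15_pNorm_one sf hp,
      TN15_pNorm_one sf hp, ?_⟩
    · rw [norm_smul]
      simp [abs_of_nonneg (inv_nonneg.mpr hS0.le), inv_mul_cancel₀ (ne_of_gt hS0)]
    · rw [one_mul, mul_one, map_smul, norm_smul]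
      simp [abs_of_nonneg (inv_nonneg.mpr hS0.le)]
  have hle : ‖S‖⁻¹ * ‖φ S‖ ≤ 1 := le_trans (le_csSup hφ hmem) hφ1
  calc ‖φ S‖ = ‖S‖ * (‖S‖⁻¹ * ‖φ S‖) := by field_simp
    _ ≤ ‖S‖ * 1 := mul_le_mul_of_nonneg_left hle hS0.le
    _ = ‖S‖ := mul_one _

lemma TN15_vecstate (sf : StandardForm M) {p : ℝ} (hp : 2 ≤ p)
    (u : ℕ → H →L[ℂ] H) (huM : ∀ n, u n ∈ M)
    (huU : ∀ n, star (u n) * u n = 1 ∧ u n * star (u n) = 1) (n : ℕ) :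
    ∃ φ : (H →L[ℂ] H) →L[ℂ] ℂ, MemBp sf p φ ∧ BpNorm sf p φ ≤ 1 ∧
      ∀ S : H →L[ℂ] H, ‖φ S‖ = ‖(inner ℂ (S ((u n) sf.Ω)) ((u n) sf.Ω) : ℂ)‖ := by
  set e : H := (u n) sf.Ω with he
  refine ⟨(innerSL ℂ e).comp (ContinuousLinearMap.apply ℂ H e), ?_, ?_, ?_⟩
  case refine_3 =>
    intro S
    simp only [ContinuousLinearMap.coe_comp', Function.comp_apply,
      ContinuousLinearMap.apply_apply, innerSL_apply_apply]
    rw [← inner_conj_symm]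
    exact RCLike.norm_conj (K := ℂ) _
  all_goals {
    have hbound : ∀ r ∈ dualSet sf p ((innerSL ℂ e).comp (ContinuousLinearMap.apply ℂ H e)),
        r ≤ 1 := by
      rintro r ⟨x, hx, y, hy, S, hS, hxp, hyp, rfl⟩
      simp only [ContinuousLinearMap.coe_comp', Function.comp_apply,
        ContinuousLinearMap.apply_apply, innerSL_apply_apply, ContinuousLinearMap.mul_apply]
      have key : (inner ℂ e (x (S (y e))) : ℂ) = inner ℂ ((star x) e) (S (y e)) := by
        rw [ContinuousLinearMap.star_eq_adjoint, ContinuousLinearMap.adjoint_inner_left]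
      rw [key]
      have hx2 : ‖(star x) e‖ ≤ 1 := by
        rw [he, TN15_shift sf (star_mem hx) (huM n) (huU n).2, TN15_star_norm sf hx]
        exact TN15_L2le sf hp x hxp
      have hy2 : ‖y e‖ ≤ 1 := by
        rw [he, TN15_shift sf hy (huM n) (huU n).2]
        exact TN15_L2le sf hp y hyp
      calc ‖(inner ℂ ((star x) e) (S (y e)) : ℂ)‖ ≤ ‖(star x) e‖ * ‖S (y e)‖ :=
            norm_inner_le_norm _ _
        _ ≤ 1 * (‖S‖ * ‖y e‖) := by
            refine mul_le_mul hx2 (S.le_opNorm _) (norm_nonneg _) zero_le_one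
        _ ≤ 1 * (1 * 1) := by
            refine mul_le_mul_of_nonneg_left ?_ zero_le_one
            exact mul_le_mul hS hy2 (norm_nonneg _) (le_trans (norm_nonneg S) hS)
        _ = 1 := by norm_num
    first
      | exact ⟨1, fun r hr => hbound r hr⟩
      | exact Real.sSup_le hbound zero_le_one
  }

/-- Let `uₙ ∈ U(M)` be unitaries with `τ(uₙ^* uₘ) = 0` for `n ≠ m`,
and let `D = E₀(T)` be the operator vanishing on the orthocomplement of
`H₀ = span {ûₙ}` and diagonal on `H₀` with `D ûₙ = ⟨T ûₙ, ûₙ⟩ ûₙ`. Then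
`|||E₀(T)|||_p ≤ |||T|||_p`; moreover if `T` is itself such a diagonal operator
(`T = E₀(T)`), then `|||T|||_p = ‖T‖`. -/
theorem tripNorm_diagonal (sf : StandardForm M) (p : ℝ) (hp : 2 ≤ p)
    (u : ℕ → H →L[ℂ] H) (huM : ∀ n, u n ∈ M)
    (huU : ∀ n, star (u n) * u n = 1 ∧ u n * star (u n) = 1)
    (horth : ∀ m n : ℕ, m ≠ n → SFtrace sf (star (u n) * u m) = 0)
    (T D : H →L[ℂ] H)
    (hD1 : ∀ n, D ((u n) sf.Ω) =
      (inner ℂ (T ((u n) sf.Ω)) ((u n) sf.Ω) : ℂ) • ((u n) sf.Ω))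
    (hD0 : ∀ ζ : H, (∀ n, (inner ℂ ((u n) sf.Ω) ζ : ℂ) = 0) → D ζ = 0) :
    tripNorm sf p D ≤ tripNorm sf p T ∧ (T = D → tripNorm sf p T = ‖T‖) := by
  set e : ℕ → H := fun n => (u n) sf.Ω with he
  set d : ℕ → ℂ := fun n => inner ℂ (T (e n)) (e n) with hd
  have horthn : Orthonormal ℂ e := TN15_orth sf u (fun n => (huU n).1) horth
  have hne : ∀ n, ‖e n‖ = 1 := fun n => horthn.1 n
  have hbddd : ∀ n, ‖d n‖ ≤ ‖T‖ := by
    intro n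
    calc ‖d n‖ ≤ ‖T (e n)‖ * ‖e n‖ := norm_inner_le_norm _ _
      _ ≤ (‖T‖ * ‖e n‖) * ‖e n‖ :=
          mul_le_mul_of_nonneg_right (T.le_opNorm _) (norm_nonneg _)
      _ = ‖T‖ := by rw [hne n]; ring
  set C := ⨆ n, ‖d n‖ with hC
  have hCd : ∀ n, ‖d n‖ ≤ C := fun n => le_ciSup ⟨‖T‖, fun r ⟨n, hn⟩ => hn ▸ hbddd n⟩ n
  have hC0 : 0 ≤ C := le_trans (norm_nonneg _) (hCd 0)
  have hDC : ‖D‖ ≤ C := TN15_opnorm_le e horthn D d hD1 hD0 C hC0 hCd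
  have hbddT : BddAbove {r | ∃ φ : (H →L[ℂ] H) →L[ℂ] ℂ,
      MemBp sf p φ ∧ BpNorm sf p φ ≤ 1 ∧ r = ‖φ T‖} := by
    refine ⟨‖T‖, ?_⟩
    rintro r ⟨φ, h1, h2, rfl⟩
    exact TN15_elt_le sf hp T h1 h2
  have hdmem : ∀ n, ‖d n‖ ∈ {r | ∃ φ : (H →L[ℂ] H) →L[ℂ] ℂ,
      MemBp sf p φ ∧ BpNorm sf p φ ≤ 1 ∧ r = ‖φ T‖} := by
    intro n
    obtain ⟨φ, h1, h2, h3⟩ := TN15_vecstate sf hp u huM huU n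
    exact ⟨φ, h1, h2, (h3 T).symm⟩
  have hCtrip : C ≤ tripNorm sf p T := ciSup_le fun n => le_csSup hbddT (hdmem n)
  have htrip0 : 0 ≤ tripNorm sf p T :=
    le_trans (norm_nonneg (d 0)) (le_csSup hbddT (hdmem 0))
  constructor
  · refine Real.sSup_le ?_ htrip0
    rintro r ⟨φ, h1, h2, rfl⟩
    calc ‖φ D‖ ≤ ‖D‖ := TN15_elt_le sf hp D h1 h2
      _ ≤ C := hDC
      _ ≤ tripNorm sf p T := hCtrip
  · intro hTD
    have hle : tripNorm sf p T ≤ ‖T‖ := by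
      refine Real.sSup_le ?_ (norm_nonneg T)
      rintro r ⟨φ, h1, h2, rfl⟩
      exact TN15_elt_le sf hp T h1 h2
    have hge : ‖T‖ ≤ tripNorm sf p T := by
      rw [hTD] at hCtrip ⊢
      exact le_trans hDC hCtrip
    linarith
end
end

section
/- Let (M,τ) be a tracial von Neumann algebra, B a Banach M-bimodule, and δ: M → B a derivation (automatically norm-bounded). Then δ is ‖·‖₂–q_M continuous on the unit ball of M: for every ε > 0 and x ∈ (M)₁ with ‖x‖₂ ≤ (ε/2)^{3/2}, there exists a projection p ∈ M with τ(1-p) ≤ ε and ‖p δ(x) p‖ ≤ ε‖δ‖. -/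
set_option linter.unusedSectionVars false
set_option linter.unusedVariables false
set_option maxHeartbeats 1000000

open Filter Topology


noncomputable section

variable {H : Type*} [NormedAddCommGroup H] [InnerProductSpace ℂ H] [CompleteSpace H]

variable {M : VonNeumannAlgebra H}

/-- `e` is an orthogonal projection. -/
def IsProjection (e : H →L[ℂ] H) : Prop := IsSelfAdjoint e ∧ e * e = e

/-- A Banach `M`-bimodule: a Banach space with commuting contractive left and right
`B(H)`-module actions (restricted to `M` in applications). -/
structure BanachBimodule (M : VonNeumannAlgebra H) (V : Type*)
    [NormedAddCommGroup V] [NormedSpace ℂ V] where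
  lsmul : (H →L[ℂ] H) → V → V
  rsmul : V → (H →L[ℂ] H) → V
  lsmul_add : ∀ x v w, lsmul x (v + w) = lsmul x v + lsmul x w
  add_lsmul : ∀ x y v, lsmul (x + y) v = lsmul x v + lsmul y v
  rsmul_add : ∀ v w x, rsmul (v + w) x = rsmul v x + rsmul w x
  add_rsmul : ∀ v x y, rsmul v (x + y) = rsmul v x + rsmul v y
  lsmul_mul : ∀ x y v, lsmul (x * y) v = lsmul x (lsmul y v)
  rsmul_mul : ∀ v x y, rsmul (rsmul v x) y = rsmul v (x * y)
  lsmul_rsmul : ∀ x v y, rsmul (lsmul x v) y = lsmul x (rsmul v y)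
  one_lsmul : ∀ v, lsmul 1 v = v
  rsmul_one : ∀ v, rsmul v 1 = v
  lsmul_smul : ∀ (c : ℂ) x v, lsmul (c • x) v = c • lsmul x v
  rsmul_smul : ∀ (c : ℂ) v x, rsmul v (c • x) = c • rsmul v x
  norm_lsmul : ∀ x v, ‖lsmul x v‖ ≤ ‖x‖ * ‖v‖
  norm_rsmul : ∀ v x, ‖rsmul v x‖ ≤ ‖v‖ * ‖x‖

lemma re_inner_self' (u : H) : (inner ℂ u u : ℂ).re = ‖u‖ ^ 2 := by
  have := inner_self_eq_norm_sq (𝕜 := ℂ) u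
  simpa [RCLike.re_to_complex] using this

lemma re_inner_le_of_le' {S T : H →L[ℂ] H} (h : S ≤ T) (ξ : H) :
    (inner ℂ (S ξ) ξ : ℂ).re ≤ (inner ℂ (T ξ) ξ : ℂ).re := by
  rw [ContinuousLinearMap.le_def] at h
  have h0 := h.inner_nonneg_left ξ
  simp only [ContinuousLinearMap.sub_apply, inner_sub_left] at h0
  have : (0:ℝ) ≤ ((inner ℂ (T ξ) ξ : ℂ) - inner ℂ (S ξ) ξ).re := (Complex.le_def.mp h0).1
  rw [Complex.sub_re] at this
  linarith

lemma inner_star_mul_self' (y : H →L[ℂ] H) (u : H) :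
    (inner ℂ ((star y * y) u) u : ℂ) = inner ℂ (y u) (y u) := by
  rw [ContinuousLinearMap.mul_apply, ContinuousLinearMap.star_eq_adjoint,
    ContinuousLinearMap.adjoint_inner_left]

lemma inner_mul_star_self' (y : H →L[ℂ] H) (u : H) :
    (inner ℂ ((y * star y) u) u : ℂ) = inner ℂ ((star y) u) ((star y) u) := by
  have := inner_star_mul_self' (star y) u
  rwa [star_star] at this

lemma re_inner_real_smul_apply' (rr : ℝ) (Q : H →L[ℂ] H) (u v : H) :
    (inner ℂ ((rr • Q) u) v : ℂ).re = rr * (inner ℂ (Q u) v : ℂ).re := by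
  have h1 : (rr • Q) u = (rr : ℂ) • (Q u) := by
    rw [ContinuousLinearMap.smul_apply]
    exact RCLike.real_smul_eq_coe_smul (K := ℂ) rr (Q u)
  rw [h1, inner_smul_left]
  simp [Complex.re_ofReal_mul]

lemma mem_vna_of_commute' {y : H →L[ℂ] H}
    (h : ∀ T ∈ Set.centralizer (M : Set (H →L[ℂ] H)), T * y = y * T) : y ∈ M := by
  have hmem : y ∈ Set.centralizer (Set.centralizer (M : Set (H →L[ℂ] H))) := h
  rw [M.centralizer_centralizer] at hmem
  exact hmem

lemma cfc_mem_vna' {a : H →L[ℂ] H} (haM : a ∈ M) (f : ℝ → ℝ) : cfc f a ∈ M := by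
  by_cases hsa : IsSelfAdjoint a
  · by_cases hf : ContinuousOn f (spectrum ℝ a)
    · rw [cfc_apply f a hsa hf]
      apply mem_vna_of_commute'
      intro T hT
      induction (⟨_, hf.restrict⟩ : C(spectrum ℝ a, ℝ)) using
          ContinuousMap.induction_on_of_compact with
      | const r =>
        have hconst : (ContinuousMap.const (spectrum ℝ a) r)
            = algebraMap ℝ C(spectrum ℝ a, ℝ) r := rfl
        rw [hconst, AlgHomClass.commutes]
        exact (Algebra.commutes r T).symm
      | id =>
        rw [cfcHom_id hsa]
        exact (hT a haM).symm
      | star_id =>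
        have : star ((ContinuousMap.id ℝ).restrict (spectrum ℝ a))
            = (ContinuousMap.id ℝ).restrict (spectrum ℝ a) := by
          ext z; simp
        rw [this, cfcHom_id hsa]
        exact (hT a haM).symm
      | add f g hf hg => rw [map_add, mul_add, add_mul, hf, hg]
      | mul f g hf hg => rw [map_mul, ← mul_assoc, hf, mul_assoc, hg, ← mul_assoc]
      | frequently f hf =>
        have hclosed : IsClosed {g : C(spectrum ℝ a, ℝ) |
            T * cfcHom hsa g = cfcHom hsa g * T} := by
          apply isClosed_eq
          · exact (continuous_mul_left T).comp (cfcHom_isClosedEmbedding hsa).continuous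
          · exact (continuous_mul_right T).comp (cfcHom_isClosedEmbedding hsa).continuous
        exact hclosed.closure_subset (hf.mem_closure)
    · rw [cfc_apply_of_not_continuousOn a hf]; exact zero_mem M
  · rw [cfc_apply_of_not_predicate a hsa]; exact zero_mem M

/-- A derivation `δ : M → V` into a Banach `M`-bimodule (with norm
bound `‖δ(x)‖ ≤ C ‖x‖`) is automatically `‖·‖₂`–`q_M` continuous on the unit ball:
for every `ε > 0` and `x ∈ (M)₁` with `‖x‖₂ = ‖xΩ‖ ≤ (ε/2)^{3/2}`, there is a
projection `e ∈ M` with `τ(1-e) ≤ ε` and `‖e δ(x) e‖ ≤ ε C`. -/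
theorem derivation_smooth {V : Type*} [NormedAddCommGroup V] [NormedSpace ℂ V]
    (sf : StandardForm M) (B : BanachBimodule M V)
    (δ : (H →L[ℂ] H) → V)
    (hadd : ∀ x ∈ M, ∀ y ∈ M, δ (x + y) = δ x + δ y)
    (hsmul : ∀ (c : ℂ), ∀ x ∈ M, δ (c • x) = c • δ x)
    (hder : ∀ x ∈ M, ∀ y ∈ M, δ (x * y) = B.lsmul x (δ y) + B.rsmul (δ x) y)
    (C : ℝ) (hC : ∀ x ∈ M, ‖δ x‖ ≤ C * ‖x‖)
    (ε : ℝ) (hε : 0 < ε) (x : H →L[ℂ] H) (hx : x ∈ M) (hx1 : ‖x‖ ≤ 1)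
    (hx2 : ‖x sf.Ω‖ ≤ (ε / 2) ^ ((3 : ℝ) / 2)) :
    ∃ e ∈ M, IsProjection e ∧ (SFtrace sf (1 - e)).re ≤ ε ∧
      ‖B.lsmul e (B.rsmul (δ x) e)‖ ≤ ε * C := by
  classical
  have hΩ : ‖sf.Ω‖ = 1 := sf.norm_Ω
  have hHnt : Nontrivial H := by
    refine ⟨⟨sf.Ω, 0, fun h => ?_⟩⟩
    rw [h, norm_zero] at hΩ; norm_num at hΩ
  have hC0 : 0 ≤ C := by
    have h1 := hC 1 (one_mem M)
    rw [norm_one] at h1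
    linarith [norm_nonneg (δ 1)]
  -- the cutoff and the positive element
  set c : ℝ := (ε/2)^2 with hc
  have hε2 : (0:ℝ) < ε/2 := by linarith
  have hcpos : 0 < c := by positivity
  set a : H →L[ℂ] H := star x * x + x * star x with ha
  have haM : a ∈ M := add_mem (mul_mem (star_mem hx) hx) (mul_mem hx (star_mem hx))
  have hasa : IsSelfAdjoint a := by
    rw [IsSelfAdjoint, ha, star_add, star_mul, star_star, star_mul, star_star, add_comm]
  have ha0 : (0 : H →L[ℂ] H) ≤ a := add_nonneg (star_mul_self_nonneg x) (mul_star_self_nonneg x)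
  have hspec : ∀ t ∈ spectrum ℝ a, 0 ≤ t := fun t ht => spectrum_nonneg_of_nonneg ha0 ht
  -- quadratic form identities
  have hqa : ∀ u : H, (inner ℂ (a u) u : ℂ).re = ‖x u‖^2 + ‖(star x) u‖^2 := by
    intro u
    have : a u = (star x * x) u + (x * star x) u := by
      rw [ha]; rfl
    rw [this, inner_add_left, Complex.add_re, inner_star_mul_self', inner_mul_star_self',
      re_inner_self', re_inner_self']
  -- the approximating functions
  set f : ℕ → ℝ → ℝ := fun n t => 1 - min 1 (((n:ℝ)+1) * max 0 (t - c)) with hf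
  have hfc : ∀ n, Continuous (f n) := by
    intro n
    apply Continuous.sub continuous_const
    exact (continuous_const.min (continuous_const.mul
      (continuous_const.max (continuous_id.sub continuous_const))))
  have hf0 : ∀ n t, 0 ≤ f n t := by
    intro n t
    simp only [hf, sub_nonneg]
    exact min_le_left _ _
  have hf1 : ∀ n t, f n t ≤ 1 := by
    intro n t
    simp only [hf]
    have : 0 ≤ min 1 (((n:ℝ)+1) * max 0 (t - c)) := le_min (by norm_num) (by positivity)
    linarith
  have hfanti : ∀ {n m : ℕ}, n ≤ m → ∀ t, f m t ≤ f n t := by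
    intro n m hnm t
    simp only [hf, sub_le_sub_iff_left]
    refine min_le_min le_rfl (mul_le_mul_of_nonneg_right ?_ (le_max_left _ _))
    have : (n:ℝ) ≤ m := Nat.cast_le.mpr hnm
    linarith
  have hfsq : ∀ (n : ℕ) (t : ℝ), f (2*n+1) t ≤ f n t * f n t := by
    intro n t
    simp only [hf]
    set q : ℝ := max 0 (t - c) with hq
    have hq0 : 0 ≤ q := le_max_left _ _
    have hcoef : ((2*n+1 : ℕ) : ℝ) + 1 = 2 * (((n:ℕ) : ℝ) + 1) := by push_cast; ring
    rw [hcoef]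
    set w : ℝ := ((n:ℕ) : ℝ) + 1 with hw
    have hw0 : (0:ℝ) < w := by positivity
    rcases le_or_gt 1 (w * q) with h | h
    · rw [min_eq_left h, min_eq_left (by nlinarith)]
      norm_num
    · rw [min_eq_right h.le]
      rcases le_or_gt 1 (2 * w * q) with h2 | h2
      · rw [min_eq_left h2]
        nlinarith
      · rw [min_eq_right h2.le]
        nlinarith [mul_nonneg hw0.le hq0]
  -- the operators P n
  set P : ℕ → H →L[ℂ] H := fun n => cfc (f n) a with hP
  have hPsa : ∀ n, IsSelfAdjoint (P n) := fun n => cfc_predicate (f n) a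
  have hPM : ∀ n, P n ∈ M := fun n => cfc_mem_vna' haM (f n)
  have hPsymm : ∀ n (u v : H), (inner ℂ ((P n) u) v : ℂ) = inner ℂ u ((P n) v) :=
    fun n => (ContinuousLinearMap.isSelfAdjoint_iff_isSymmetric.mp (hPsa n))
  have hP0 : ∀ n, (0 : H →L[ℂ] H) ≤ P n := fun n => cfc_nonneg (fun t _ => hf0 n t)
  have hPle : ∀ {n m : ℕ}, n ≤ m → P m ≤ P n :=
    fun {n m} h => cfc_mono (fun t _ => hfanti h t) ((hfc m).continuousOn) ((hfc n).continuousOn)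
  have hPnorm : ∀ n (u : H), ‖P n u‖ ≤ ‖u‖ := by
    intro n u
    have h1 : ‖P n‖ ≤ 1 := by
      apply norm_cfc_le zero_le_one
      intro t ht
      rw [Real.norm_eq_abs, abs_le]
      exact ⟨by linarith [hf0 n t], hf1 n t⟩
    calc ‖P n u‖ ≤ ‖P n‖ * ‖u‖ := (P n).le_opNorm u
    _ ≤ 1 * ‖u‖ := by gcongr
    _ = ‖u‖ := one_mul _
  have hcontraction : ∀ (w : ℝ → ℝ), Continuous w → (∀ t, 0 ≤ w t) → (∀ t, w t ≤ 1) →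
      ∀ u : H, ‖(cfc w a) u‖^2 ≤ (inner ℂ ((cfc w a) u) u : ℂ).re := by
    intro w hwc hw0 hw1 u
    have hdsq : cfc (fun t => w t * w t) a = cfc w a * cfc w a :=
      cfc_mul w w a hwc.continuousOn hwc.continuousOn
    have hsymd : ∀ (v₁ v₂ : H), (inner ℂ ((cfc w a) v₁) v₂ : ℂ) = inner ℂ v₁ ((cfc w a) v₂) :=
      ContinuousLinearMap.isSelfAdjoint_iff_isSymmetric.mp (cfc_predicate w a)
    have hmono : cfc (fun t => w t * w t) a ≤ cfc w a :=
      cfc_mono (fun t _ => by nlinarith [hw0 t, hw1 t]) ((hwc.mul hwc).continuousOn)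
        hwc.continuousOn
    have heq : ‖(cfc w a) u‖^2 = (inner ℂ ((cfc (fun t => w t * w t) a) u) u : ℂ).re := by
      rw [← re_inner_self']
      congr 1
      rw [hdsq, ContinuousLinearMap.mul_apply]
      exact (hsymd ((cfc w a) u) u).symm
    rw [heq]
    exact re_inner_le_of_le' hmono u
  -- quadratic sequence
  set r : H → ℕ → ℝ := fun u n => (inner ℂ ((P n) u) u : ℂ).re with hr
  have hranti : ∀ u, Antitone (r u) := fun u _ _ h => re_inner_le_of_le' (hPle h) u
  have hrnonneg : ∀ u n, 0 ≤ r u n := by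
    intro u n
    have := re_inner_le_of_le' (hP0 n) u
    simpa using this
  have hrtend : ∀ u : H, ∃ L, Tendsto (r u) atTop (𝓝 L) := by
    intro u
    exact ⟨_, tendsto_atTop_ciInf (hranti u) ⟨0, fun z ⟨n, hn⟩ => hn ▸ hrnonneg u n⟩⟩
  -- key: difference bound  ‖(P n - P m) u‖^2 ≤ r u n - r u m for n ≤ m
  have hkey : ∀ {n m : ℕ}, n ≤ m → ∀ u : H, ‖P n u - P m u‖^2 ≤ r u n - r u m := by
    intro n m hnm u
    set g : ℝ → ℝ := fun t => f n t - f m t with hg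
    have hgc : Continuous g := (hfc n).sub (hfc m)
    have hg0 : ∀ t, 0 ≤ g t := fun t => sub_nonneg.mpr (hfanti hnm t)
    have hg1 : ∀ t, g t ≤ 1 := by
      intro t
      have h1 := hf0 m t
      have h2 := hf1 n t
      simp only [hg]
      linarith
    have hdeq : cfc g a = P n - P m :=
      cfc_sub (f n) (f m) a ((hfc n).continuousOn) ((hfc m).continuousOn)
    have hdsq : cfc (fun t => g t * g t) a = cfc g a * cfc g a :=
      cfc_mul g g a hgc.continuousOn hgc.continuousOn
    have hsymd : ∀ (v w : H), (inner ℂ ((cfc g a) v) w : ℂ) = inner ℂ v ((cfc g a) w) :=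
      ContinuousLinearMap.isSelfAdjoint_iff_isSymmetric.mp (cfc_predicate g a)
    have hmono : cfc (fun t => g t * g t) a ≤ cfc g a := by
      apply cfc_mono (fun t _ => ?_) ((hgc.mul hgc).continuousOn) hgc.continuousOn
      show g t * g t ≤ g t
      nlinarith [hg0 t, hg1 t]
    have hnormeq : ‖P n u - P m u‖^2 = (inner ℂ ((cfc (fun t => g t * g t) a) u) u : ℂ).re := by
      have e0 : P n u - P m u = (cfc g a) u := by rw [hdeq]; rfl
      rw [e0, ← re_inner_self' ((cfc g a) u)]
      congr 1
      rw [hdsq, ContinuousLinearMap.mul_apply]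
      exact (hsymd ((cfc g a) u) u).symm
    have hfin : (inner ℂ ((cfc g a) u) u : ℂ).re = r u n - r u m := by
      rw [hdeq]
      simp only [ContinuousLinearMap.sub_apply, inner_sub_left, Complex.sub_re, hr]
    rw [hnormeq, ← hfin]
    exact re_inner_le_of_le' hmono u
  -- the strong limit p
  have hcauchy : ∀ u : H, CauchySeq (fun n => P n u) := by
    intro u
    obtain ⟨L, hL⟩ := hrtend u
    rw [Metric.cauchySeq_iff]
    intro ε' hε'
    have hrc : CauchySeq (r u) := hL.cauchySeq
    rw [Metric.cauchySeq_iff] at hrc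
    obtain ⟨N, hN⟩ := hrc (ε'^2) (by positivity)
    refine ⟨N, fun m₁ hm₁ n₁ hn₁ => ?_⟩
    have key : ∀ {i j : ℕ}, N ≤ i → N ≤ j → i ≤ j → dist (P i u) (P j u) < ε' := by
      intro i j hi hj hij
      have h1 := hkey hij u
      have h2 := hN i hi j hj
      rw [Real.dist_eq] at h2
      have h3 : r u i - r u j < ε'^2 := lt_of_le_of_lt (le_abs_self _) h2
      rw [dist_eq_norm]
      nlinarith [norm_nonneg (P i u - P j u)]
    rcases le_total m₁ n₁ with h | h
    · exact key hm₁ hn₁ h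
    · rw [dist_comm]; exact key hn₁ hm₁ h
  have hconv : ∀ u : H, ∃ w : H, Tendsto (fun n => P n u) atTop (𝓝 w) :=
    fun u => cauchySeq_tendsto_of_complete (hcauchy u)
  choose plim hplim using hconv
  have hplim_add : ∀ u v : H, plim (u + v) = plim u + plim v := by
    intro u v
    refine tendsto_nhds_unique (by simpa [map_add] using hplim (u + v)) ?_
    exact (hplim u).add (hplim v)
  have hplim_smul : ∀ (z : ℂ) (u : H), plim (z • u) = z • plim u := by
    intro z u
    refine tendsto_nhds_unique (by simpa [map_smul] using hplim (z • u)) ?_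
    exact (hplim u).const_smul z
  have hplim_norm : ∀ u : H, ‖plim u‖ ≤ ‖u‖ := by
    intro u
    refine le_of_tendsto ((hplim u).norm) (Eventually.of_forall fun n => hPnorm n u)
  set p : H →L[ℂ] H := LinearMap.mkContinuous
    { toFun := plim, map_add' := hplim_add, map_smul' := hplim_smul } 1
    (fun u => by simpa using hplim_norm u) with hpdef
  have hp_app : ∀ u : H, Tendsto (fun n => P n u) atTop (𝓝 (p u)) := fun u => hplim u
  have hp_norm : ∀ u, ‖p u‖ ≤ ‖u‖ := hplim_norm
  -- p is selfadjoint
  have hpsa : IsSelfAdjoint p := by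
    rw [ContinuousLinearMap.isSelfAdjoint_iff_isSymmetric]
    intro u v
    have h1 : Tendsto (fun n => (inner ℂ ((P n) u) v : ℂ)) atTop (𝓝 (inner ℂ (p u) v)) :=
      (hp_app u).inner tendsto_const_nhds
    have h2 : Tendsto (fun n => (inner ℂ u ((P n) v) : ℂ)) atTop (𝓝 (inner ℂ u (p v))) :=
      tendsto_const_nhds.inner (hp_app v)
    have := tendsto_nhds_unique h1 (by simpa [fun n => hPsymm n u v] using h2)
    exact this
  -- p ∈ M
  have hpM : p ∈ M := by
    apply mem_vna_of_commute'
    intro T hT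
    ext u
    have h1 : Tendsto (fun n => T (P n u)) atTop (𝓝 (T (p u))) :=
      (T.continuous.tendsto _).comp (hp_app u)
    have h2 : ∀ n, T (P n u) = P n (T u) := by
      intro n
      have := hT (P n) (hPM n)
      calc T (P n u) = (T * P n) u := rfl
      _ = (P n * T) u := by rw [this]
      _ = P n (T u) := rfl
    rw [show (fun n => T (P n u)) = fun n => P n (T u) from funext h2] at h1
    exact tendsto_nhds_unique h1 (hp_app (T u))
  -- p is idempotent
  have hpidem : p * p = p := by
    ext u
    rw [ContinuousLinearMap.mul_apply]
    have h2 : Tendsto (fun k => P k (P k u)) atTop (𝓝 (p (p u))) := by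
      have hz : Tendsto (fun k => P k (P k u) - P k (p u)) atTop (𝓝 0) := by
        have hb : ∀ k, ‖P k (P k u) - P k (p u)‖ ≤ ‖P k u - p u‖ := by
          intro k
          rw [← map_sub]; exact hPnorm k _
        have h5 : Tendsto (fun k => P k u - p u) atTop (𝓝 0) := by
          have := (hp_app u).sub_const (p u)
          rwa [sub_self] at this
        exact squeeze_zero_norm hb (by simpa using h5.norm)
      simpa using hz.add (hp_app (p u))
    have h4 : Tendsto (fun k => P k (P k u)) atTop (𝓝 (p u)) := by
      obtain ⟨L, hL⟩ := hrtend u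
      have hsqb : ∀ k, ‖P k (P k u) - P k u‖^2 ≤ r u k - r u (2*k+1) := by
        intro k
        have hw0 : ∀ t, 0 ≤ f k t - f k t * f k t := fun t => by
          nlinarith [hf0 k t, hf1 k t]
        have hw1 : ∀ t, f k t - f k t * f k t ≤ 1 := fun t => by
          nlinarith [hf0 k t, hf1 k t]
        have hdeq : cfc (fun t => f k t - f k t * f k t) a = P k - P k * P k := by
          rw [cfc_sub (f k) (fun t => f k t * f k t) a (hfc k).continuousOn
            ((hfc k).mul (hfc k)).continuousOn,
            cfc_mul (f k) (f k) a (hfc k).continuousOn (hfc k).continuousOn]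
        have hb := hcontraction (fun t => f k t - f k t * f k t) ((hfc k).sub ((hfc k).mul (hfc k))) hw0 hw1 u
        rw [hdeq] at hb
        have hPPge : P (2*k+1) ≤ cfc (fun t => f k t * f k t) a :=
          cfc_mono (fun t _ => hfsq k t) (hfc (2*k+1)).continuousOn
            ((hfc k).mul (hfc k)).continuousOn
        have hPPre := re_inner_le_of_le' hPPge u
        have hre : (inner ℂ ((P k - P k * P k) u) u : ℂ).re
            = r u k - (inner ℂ ((cfc (fun t => f k t * f k t) a) u) u : ℂ).re := by
          rw [cfc_mul (f k) (f k) a (hfc k).continuousOn (hfc k).continuousOn]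
          simp only [ContinuousLinearMap.sub_apply, inner_sub_left, Complex.sub_re, hr]
          rfl
        have hnrm : ‖P k (P k u) - P k u‖ = ‖(P k - P k * P k) u‖ := by
          have he : (P k - P k * P k) u = P k u - P k (P k u) := by
            simp [ContinuousLinearMap.sub_apply, ContinuousLinearMap.mul_apply]
          rw [he, norm_sub_rev]
        rw [hnrm]
        calc ‖(P k - P k * P k) u‖^2 ≤ (inner ℂ ((P k - P k * P k) u) u : ℂ).re := hb
          _ = r u k - (inner ℂ ((cfc (fun t => f k t * f k t) a) u) u : ℂ).re := hre
          _ ≤ r u k - r u (2*k+1) := by linarith [hPPre]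
      have tend0 : Tendsto (fun k => r u k - r u (2*k+1)) atTop (𝓝 0) := by
        have ht2 : Tendsto (fun k : ℕ => 2*k+1) atTop atTop :=
          tendsto_atTop_mono (fun k => by show k ≤ 2*k+1; omega) tendsto_id
        have := hL.sub (hL.comp ht2)
        simpa using this
      have hsq : ∀ k, ‖P k (P k u) - P k u‖ ≤ Real.sqrt (r u k - r u (2*k+1)) := by
        intro k
        have := Real.sqrt_le_sqrt (hsqb k)
        rwa [Real.sqrt_sq (norm_nonneg _)] at this
      have h0 : Tendsto (fun k => Real.sqrt (r u k - r u (2*k+1))) atTop (𝓝 0) := by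
        have := (Real.continuous_sqrt.tendsto 0).comp tend0
        simpa [Function.comp_def] using this
      have h3 : Tendsto (fun k => P k (P k u) - P k u) atTop (𝓝 0) :=
        squeeze_zero_norm hsq h0
      simpa using h3.add (hp_app u)
    exact tendsto_nhds_unique h2 h4
  -- quadratic bound:  re⟪a (p u), p u⟫ ≤ c ‖p u‖²
  have hapu : ∀ u : H, (inner ℂ (a (p u)) (p u) : ℂ).re ≤ c * ‖p u‖^2 := by
    intro u
    have hineq : ∀ n : ℕ, (inner ℂ (a (P n u)) (P n u) : ℂ).re
        ≤ (c + 1/((n:ℝ)+1)) * ‖P n u‖^2 := by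
      intro n
      have hnpos : (0:ℝ) < (n:ℝ)+1 := by positivity
      have hXeq : cfc (fun t => f n t * (t * f n t)) a = P n * (a * P n) := by
        rw [cfc_mul (f n) (fun t => t * f n t) a (hfc n).continuousOn
          (continuous_id.mul (hfc n)).continuousOn,
          cfc_mul (fun t : ℝ => t) (f n) a continuous_id.continuousOn (hfc n).continuousOn,
          cfc_id' ℝ a]
      have hYeq : cfc (fun t => (c + 1/((n:ℝ)+1)) * (f n t * f n t)) a
          = (c + 1/((n:ℝ)+1)) • (P n * P n) := by
        rw [cfc_const_mul (c + 1/((n:ℝ)+1)) (fun t => f n t * f n t) a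
          ((hfc n).mul (hfc n)).continuousOn,
          cfc_mul (f n) (f n) a (hfc n).continuousOn (hfc n).continuousOn]
      have hmono : cfc (fun t => f n t * (t * f n t)) a
          ≤ cfc (fun t => (c + 1/((n:ℝ)+1)) * (f n t * f n t)) a := by
        apply cfc_mono (fun t _ => ?_)
          ((hfc n).mul (continuous_id.mul (hfc n))).continuousOn
          (continuous_const.mul ((hfc n).mul (hfc n))).continuousOn
        show f n t * (t * f n t) ≤ (c + 1/((n:ℝ)+1)) * (f n t * f n t)
        rcases le_or_gt t (c + 1/((n:ℝ)+1)) with h | h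
        · nlinarith [mul_nonneg (mul_nonneg (sub_nonneg.mpr h) (hf0 n t)) (hf0 n t)]
        · have hq : max 0 (t - c) = t - c := by
            apply max_eq_right
            have : (0:ℝ) < 1/((n:ℝ)+1) := by positivity
            linarith
          have hinv : ((n:ℝ)+1) * (1/((n:ℝ)+1)) = 1 := by
            field_simp
          have h1 : (1:ℝ) ≤ ((n:ℝ)+1) * max 0 (t - c) := by
            rw [hq]
            nlinarith
          have hft : f n t = 0 := by
            simp only [hf]
            rw [min_eq_left h1]
            ring
          rw [hft]
          simp
      have h3 := re_inner_le_of_le' hmono u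
      rw [hXeq, hYeq] at h3
      have hL : (inner ℂ ((P n * (a * P n)) u) u : ℂ).re
          = (inner ℂ (a (P n u)) (P n u) : ℂ).re := by
        have : (P n * (a * P n)) u = P n (a (P n u)) := rfl
        rw [this, hPsymm n (a (P n u)) u]
      have hR : (inner ℂ (((c + 1/((n:ℝ)+1)) • (P n * P n)) u) u : ℂ).re
          = (c + 1/((n:ℝ)+1)) * ‖P n u‖^2 := by
        rw [re_inner_real_smul_apply']
        congr 1
        have : (P n * P n) u = P n (P n u) := rfl
        rw [this, hPsymm n (P n u) u, re_inner_self']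
      rw [hL, hR] at h3
      exact h3
    have hLHS : Tendsto (fun n => (inner ℂ (a (P n u)) (P n u) : ℂ).re) atTop
        (𝓝 ((inner ℂ (a (p u)) (p u) : ℂ).re)) := by
      have h1 : Tendsto (fun n => a (P n u)) atTop (𝓝 (a (p u))) :=
        (a.continuous.tendsto _).comp (hp_app u)
      exact (Complex.continuous_re.tendsto _).comp (h1.inner (hp_app u))
    have hRHS : Tendsto (fun n : ℕ => (c + 1/((n:ℝ)+1)) * ‖P n u‖^2) atTop
        (𝓝 (c * ‖p u‖^2)) := by
      have h1 : Tendsto (fun n : ℕ => c + 1/((n:ℝ)+1)) atTop (𝓝 c) := by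
        have h0 := tendsto_one_div_add_atTop_nhds_zero_nat (𝕜 := ℝ)
        simpa using (tendsto_const_nhds (x := c)).add h0
      have h2 : Tendsto (fun n => ‖P n u‖^2) atTop (𝓝 (‖p u‖^2)) := ((hp_app u).norm).pow 2
      simpa using h1.mul h2
    exact le_of_tendsto_of_tendsto' hLHS hRHS hineq
  -- Markov bound: c * (1 - re⟪pΩ,Ω⟫) ≤ re⟪aΩ,Ω⟫
  have hmarkov : c * (1 - (inner ℂ (p sf.Ω) sf.Ω : ℂ).re) ≤ (inner ℂ (a sf.Ω) sf.Ω : ℂ).re := by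
    have hineq : ∀ n : ℕ, c * (1 - r sf.Ω n) ≤ (inner ℂ (a sf.Ω) sf.Ω : ℂ).re := by
      intro n
      have hle : cfc (fun t => c * (1 - f n t)) a ≤ cfc (id : ℝ → ℝ) a := by
        apply cfc_mono (fun t ht => ?_)
          (continuous_const.mul (continuous_const.sub (hfc n))).continuousOn
          continuous_id.continuousOn
        have ht0 : 0 ≤ t := hspec t ht
        have he : 1 - f n t = min 1 (((n:ℝ)+1) * max 0 (t - c)) := by simp [hf]
        show c * (1 - f n t) ≤ t
        rw [he]
        rcases le_or_gt t c with h | h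
        · have hm : max 0 (t - c) = 0 := max_eq_left (by linarith)
          rw [hm, mul_zero]
          simpa using ht0
        · have h1 : c * min 1 (((n:ℝ)+1) * max 0 (t - c)) ≤ c * 1 :=
            mul_le_mul_of_nonneg_left (min_le_left _ _) hcpos.le
          linarith
      have hEq : cfc (fun t => c * (1 - f n t)) a = c • ((1 : H →L[ℂ] H) - P n) := by
        rw [cfc_const_mul c (fun t => 1 - f n t) a (continuous_const.sub (hfc n)).continuousOn,
          cfc_sub (fun _ : ℝ => (1:ℝ)) (f n) a continuous_const.continuousOn
            (hfc n).continuousOn,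
          cfc_const (1:ℝ) a, map_one]
      have h3 := re_inner_le_of_le' hle sf.Ω
      rw [cfc_id ℝ a, hEq, re_inner_real_smul_apply'] at h3
      have h4 : (inner ℂ (((1 : H →L[ℂ] H) - P n) sf.Ω) sf.Ω : ℂ).re = 1 - r sf.Ω n := by
        simp only [ContinuousLinearMap.sub_apply, ContinuousLinearMap.one_apply,
          inner_sub_left, Complex.sub_re, hr]
        rw [re_inner_self', hΩ]
        norm_num
      rw [h4] at h3
      exact h3
    have hlim : Tendsto (fun n => c * (1 - r sf.Ω n)) atTop
        (𝓝 (c * (1 - (inner ℂ (p sf.Ω) sf.Ω : ℂ).re))) := by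
      have h1 : Tendsto (fun n => r sf.Ω n) atTop
          (𝓝 ((inner ℂ (p sf.Ω) sf.Ω : ℂ).re)) :=
        (Complex.continuous_re.tendsto _).comp ((hp_app sf.Ω).inner tendsto_const_nhds)
      exact (tendsto_const_nhds (x := c)).mul ((tendsto_const_nhds (x := (1:ℝ))).sub h1)
    exact le_of_tendsto hlim (Eventually.of_forall hineq)
  -- trace of a is small
  have htra : (inner ℂ (a sf.Ω) sf.Ω : ℂ).re ≤ c * ε := by
    have h1 := hqa sf.Ω
    have h2 : ‖(star x) sf.Ω‖^2 = ‖x sf.Ω‖^2 := by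
      have ht := sf.tracial x hx (star x) (star_mem hx)
      have e1 := inner_star_mul_self' x sf.Ω
      have e2 := inner_mul_star_self' x sf.Ω
      have h5 : (inner ℂ ((star x) sf.Ω) ((star x) sf.Ω) : ℂ) = inner ℂ (x sf.Ω) (x sf.Ω) := by
        rw [← e2, ht, e1]
      have h6 := congrArg Complex.re h5
      rwa [re_inner_self', re_inner_self'] at h6
    have h3 : ‖x sf.Ω‖^2 ≤ (ε/2)^3 := by
      have hb := pow_le_pow_left₀ (norm_nonneg (x sf.Ω)) hx2 2
      have hB : ((ε/2) ^ ((3:ℝ)/2))^2 = (ε/2)^3 := by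
        rw [← Real.rpow_natCast ((ε/2) ^ ((3:ℝ)/2)) 2, ← Real.rpow_mul hε2.le]
        rw [show ((3:ℝ)/2 * (2:ℕ)) = ((3:ℕ):ℝ) by norm_num, Real.rpow_natCast]
      calc ‖x sf.Ω‖^2 ≤ ((ε/2) ^ ((3:ℝ)/2))^2 := hb
        _ = (ε/2)^3 := hB
    rw [h1, h2, hc]
    nlinarith [h3]
  -- trace bound on 1 - p
  have htrace : (SFtrace sf (1 - p)).re ≤ ε := by
    have h1 : (SFtrace sf (1 - p)).re = 1 - (inner ℂ (p sf.Ω) sf.Ω : ℂ).re := by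
      simp only [SFtrace, ContinuousLinearMap.sub_apply, ContinuousLinearMap.one_apply,
        inner_sub_left, Complex.sub_re]
      have : (inner ℂ sf.Ω sf.Ω : ℂ).re = 1 := by rw [re_inner_self', hΩ]; norm_num
      rw [this]
    rw [h1]
    have := hmarkov.trans htra
    nlinarith
  -- operator norm bounds
  -- pointwise quadratic bounds
  have hq2 : ∀ u : H, ‖x (p u)‖^2 + ‖(star x) (p u)‖^2 ≤ c * ‖u‖^2 := by
    intro u
    have h1 := hapu u
    rw [hqa (p u)] at h1
    have h2 : ‖p u‖^2 ≤ ‖u‖^2 := pow_le_pow_left₀ (norm_nonneg _) (hp_norm u) 2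
    nlinarith [hcpos]
  have sqrt_le : ∀ {A B : ℝ}, 0 ≤ A → 0 ≤ B → A^2 ≤ B^2 → A ≤ B := by
    intro A B hA hB h
    nlinarith
  have hxp : ‖x * p‖ ≤ ε/2 := by
    apply ContinuousLinearMap.opNorm_le_bound _ hε2.le
    intro u
    have h1 := hq2 u
    have h2 : ‖x (p u)‖^2 ≤ (ε/2 * ‖u‖)^2 := by
      have he : (ε/2 * ‖u‖)^2 = c * ‖u‖^2 := by rw [hc]; ring
      nlinarith [sq_nonneg ‖(star x) (p u)‖, norm_nonneg ((star x) (p u))]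
    have h3 : (x * p) u = x (p u) := rfl
    rw [h3]
    exact sqrt_le (norm_nonneg _) (by positivity) h2
  have hpx : ‖p * x‖ ≤ ε/2 := by
    have hstar : star (p * x) = star x * p := by
      rw [star_mul, hpsa.star_eq]
    have h0 : ‖p * x‖ = ‖star x * p‖ := by
      rw [← hstar, norm_star]
    rw [h0]
    apply ContinuousLinearMap.opNorm_le_bound _ hε2.le
    intro u
    have h1 := hq2 u
    have h2 : ‖(star x) (p u)‖^2 ≤ (ε/2 * ‖u‖)^2 := by
      have he : (ε/2 * ‖u‖)^2 = c * ‖u‖^2 := by rw [hc]; ring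
      nlinarith [sq_nonneg ‖x (p u)‖, norm_nonneg (x (p u))]
    have h3 : (star x * p) u = (star x) (p u) := rfl
    rw [h3]
    exact sqrt_le (norm_nonneg _) (by positivity) h2
  -- assemble
  refine ⟨p, hpM, ⟨hpsa, hpidem⟩, htrace, ?_⟩
  have hxpM : x * p ∈ M := mul_mem hx hpM
  have hpnorm1 : ‖p‖ ≤ 1 := LinearMap.mkContinuous_norm_le _ zero_le_one _
  have hδxp : ‖δ (x * p)‖ ≤ C * (ε/2) :=
    le_trans (hC _ hxpM) (mul_le_mul_of_nonneg_left hxp hC0)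
  have hδp : ‖δ p‖ ≤ C := by
    have := hC p hpM
    nlinarith [norm_nonneg (δ p)]
  have hrs : B.rsmul (δ x) p = δ (x * p) - B.lsmul x (δ p) := by
    rw [hder x hx p hpM]; abel
  have hsub : ∀ (z : H →L[ℂ] H) (v w : V), B.lsmul z (v - w) = B.lsmul z v - B.lsmul z w := by
    intro z v w
    have h := B.lsmul_add z w (v - w)
    rw [add_sub_cancel] at h
    rw [h]; abel
  have hv : B.lsmul p (B.rsmul (δ x) p) = B.lsmul p (δ (x * p)) - B.lsmul (p * x) (δ p) := by
    rw [hrs, hsub, B.lsmul_mul]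
  rw [hv]
  have b1 : ‖B.lsmul p (δ (x * p))‖ ≤ C * (ε/2) := by
    refine le_trans (B.norm_lsmul _ _) ?_
    calc ‖p‖ * ‖δ (x * p)‖ ≤ 1 * (C * (ε/2)) :=
          mul_le_mul hpnorm1 hδxp (norm_nonneg _) zero_le_one
      _ = C * (ε/2) := one_mul _
  have b2 : ‖B.lsmul (p * x) (δ p)‖ ≤ (ε/2) * C := by
    refine le_trans (B.norm_lsmul _ _) ?_
    exact mul_le_mul hpx hδp (norm_nonneg _) hε2.le
  calc ‖B.lsmul p (δ (x * p)) - B.lsmul (p * x) (δ p)‖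
      ≤ ‖B.lsmul p (δ (x * p))‖ + ‖B.lsmul (p * x) (δ p)‖ := norm_sub_le _ _
    _ ≤ C * (ε/2) + (ε/2) * C := add_le_add b1 b2
    _ = ε * C := by ring
end
end

section
/- Let B ⊆ eMe be a diffuse von Neumann subalgebra and σ: B → fMf a unital faithful *-homomorphism, for nonzero projections e, f ∈ M. If K ∈ qK_M (the q_M-closure of the compact operators K(L²M) in B(L²M)) satisfies Kb = σ(b)K for all b ∈ B, then K = (1-f)K(1-e). -/
set_option linter.unusedSectionVars false
set_option maxHeartbeats 1000000


noncomputable section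

variable {H : Type*} [NormedAddCommGroup H] [InnerProductSpace ℂ H] [CompleteSpace H]

variable {M : VonNeumannAlgebra H}

/-- The `τ`-rank completion `qK_M` of the compact operators `K(L²M)` in `B(L²M)`:
`T ∈ qK_M` iff there are uniformly bounded compact operators `Kₙ` and projections
`qₙ ∈ M` with `τ(1-qₙ) → 0` and `‖qₙ(T-Kₙ)qₙ‖ → 0`. -/
def qK (sf : StandardForm M) : Set (H →L[ℂ] H) :=
  {T | ∃ (K : ℕ → H →L[ℂ] H) (q : ℕ → H →L[ℂ] H) (c : ℝ),
    (∀ n, IsCompactOperator ⇑(K n)) ∧ (∀ n, ‖K n‖ ≤ c) ∧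
    (∀ n, q n ∈ M ∧ IsProjection (q n)) ∧
    Filter.Tendsto (fun n => (SFtrace sf (1 - q n)).re) Filter.atTop (nhds 0) ∧
    Filter.Tendsto (fun n => ‖q n * (T - K n) * q n‖) Filter.atTop (nhds 0)}

lemma aux_sand_left {A : Type*} [Monoid A] {e b : A} (hee : e * e = e) (h : e * b * e = b) :
    e * b = b := by
  conv_lhs => rw [← h]
  rw [← mul_assoc, ← mul_assoc, hee, h]

lemma aux_sand_right {A : Type*} [Monoid A] {e b : A} (hee : e * e = e) (h : e * b * e = b) :
    b * e = b := by
  conv_lhs => rw [← h]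
  rw [mul_assoc, hee, h]

lemma inner_star_left (A : H →L[ℂ] H) (ζ η : H) :
    (inner ℂ ((star A) ζ) η : ℂ) = inner ℂ ζ (A η) := by
  rw [ContinuousLinearMap.star_eq_adjoint]
  exact ContinuousLinearMap.adjoint_inner_left A η ζ

lemma inner_op_move (A : H →L[ℂ] H) (ζ η : H) :
    (inner ℂ (A ζ) η : ℂ) = inner ℂ ζ ((star A) η) := by
  rw [ContinuousLinearMap.star_eq_adjoint]
  exact (ContinuousLinearMap.adjoint_inner_right A ζ η).symm

lemma aux_normsq (ζ : H) : ‖ζ‖ ^ 2 = ‖(inner ℂ ζ ζ : ℂ)‖ := by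
  rw [inner_self_eq_norm_sq_to_K]
  simp [norm_pow]

lemma aux_pisom_norm_apply_le {a p : H →L[ℂ] H} (hp : IsProjection p) (ha : star a * a = p)
    (ζ : H) : ‖a ζ‖ ≤ ‖ζ‖ := by
  have h1 : (inner ℂ (a ζ) (a ζ) : ℂ) = inner ℂ ζ (p ζ) := by
    rw [inner_op_move a ζ (a ζ)]
    congr 1
    rw [← ContinuousLinearMap.mul_apply, ha]
  have h2 : ‖a ζ‖ ^ 2 ≤ ‖ζ‖ * ‖p ζ‖ := by
    rw [aux_normsq, h1]
    exact norm_inner_le_norm _ _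
  have h3 : ‖p ζ‖ ≤ ‖ζ‖ := by
    have h4 : (inner ℂ (p ζ) (p ζ) : ℂ) = inner ℂ ζ (p (p ζ)) := by
      rw [inner_op_move p ζ (p ζ), hp.1.star_eq]
    have h5 : p (p ζ) = p ζ := by rw [← ContinuousLinearMap.mul_apply, hp.2]
    have h6 : ‖p ζ‖ ^ 2 ≤ ‖ζ‖ * ‖p ζ‖ := by
      rw [aux_normsq, h4, h5]
      exact norm_inner_le_norm _ _
    nlinarith [norm_nonneg (p ζ), norm_nonneg ζ]
  nlinarith [norm_nonneg (a ζ), norm_nonneg ζ, norm_nonneg (p ζ)]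

lemma aux_proj_norm_apply_le {p : H →L[ℂ] H} (hp : IsProjection p) (ζ : H) : ‖p ζ‖ ≤ ‖ζ‖ := by
  have : star p * p = p := by rw [hp.1.star_eq, hp.2]
  exact aux_pisom_norm_apply_le hp this ζ

lemma aux_opnorm_le_one {a p : H →L[ℂ] H} (hp : IsProjection p) (ha : star a * a = p) :
    ‖a‖ ≤ 1 :=
  ContinuousLinearMap.opNorm_le_bound _ zero_le_one fun ζ => by
    simpa using aux_pisom_norm_apply_le hp ha ζ

lemma aux_star_pow {A : Type*} [Monoid A] [StarMul A] {u e : A} (huu : star u * u = e)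
    (heu : e * u = u) : ∀ n : ℕ, star (u ^ (n + 1)) * u ^ (n + 1) = e := by
  have heun : ∀ n : ℕ, e * u ^ (n + 1) = u ^ (n + 1) := fun n => by
    rw [pow_succ' u n, ← mul_assoc, heu]
  intro n
  induction n with
  | zero => simpa using huu
  | succ m ih =>
    rw [pow_succ' u (m + 1), star_mul, mul_assoc, ← mul_assoc (star u) u (u ^ (m + 1)), huu,
      heun m, ih]

lemma aux_cut (sf : StandardForm M) {Q z : H →L[ℂ] H} (hQ : Q ∈ M)
    (hQp : IsProjection Q) (hz : z ∈ M) :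
    ‖((1 : H →L[ℂ] H) - Q) (z sf.Ω)‖ ≤ ‖z‖ * Real.sqrt ‖((1 : H →L[ℂ] H) - Q) sf.Ω‖ := by
  obtain ⟨hQsa, hQQ⟩ := hQp
  set P : H →L[ℂ] H := (1 : H →L[ℂ] H) - Q with hPdef
  have hPsa : star P = P := by rw [hPdef, star_sub, star_one, hQsa.star_eq]
  have hPP : P * P = P := by
    rw [hPdef, sub_mul, one_mul, mul_sub, mul_one, hQQ, sub_self, sub_zero]
  have hPM : P ∈ M := sub_mem (one_mem M) hQ
  have key : (inner ℂ (P (z sf.Ω)) (P (z sf.Ω)) : ℂ) = inner ℂ (P sf.Ω) ((z * star z) sf.Ω) := by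
    have e1 : (inner ℂ (P (z sf.Ω)) (P (z sf.Ω)) : ℂ) = inner ℂ (z sf.Ω) (P (z sf.Ω)) := by
      rw [inner_op_move P (z sf.Ω) (P (z sf.Ω)), hPsa]
      congr 1
      rw [← ContinuousLinearMap.mul_apply, hPP]
    have e2 : (inner ℂ (z sf.Ω) (P (z sf.Ω)) : ℂ)
        = inner ℂ (((star z * P) * z) sf.Ω) sf.Ω := by
      have : P (z sf.Ω) = (P * z) sf.Ω := by rw [ContinuousLinearMap.mul_apply]
      rw [this, ← inner_star_left (P * z) (z sf.Ω) sf.Ω, star_mul, hPsa]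
      rfl
    have e3 := sf.tracial (star z * P) (mul_mem (star_mem hz) hPM) z hz
    have e4 : (inner ℂ ((z * (star z * P)) sf.Ω) sf.Ω : ℂ) = inner ℂ (P sf.Ω) ((z * star z) sf.Ω) := by
      rw [← mul_assoc, ContinuousLinearMap.mul_apply,
        inner_op_move (z * star z) (P sf.Ω) sf.Ω, star_mul, star_star]
    rw [e1, e2, e3, e4]
  have hb : ‖P (z sf.Ω)‖ ^ 2 ≤ ‖z‖ ^ 2 * ‖P sf.Ω‖ := by
    have h2 : ‖P (z sf.Ω)‖ ^ 2 = ‖(inner ℂ (P (z sf.Ω)) (P (z sf.Ω)) : ℂ)‖ := aux_normsq _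
    rw [h2, key]
    have h3 : ‖(inner ℂ (P sf.Ω) ((z * star z) sf.Ω) : ℂ)‖ ≤ ‖P sf.Ω‖ * ‖(z * star z) sf.Ω‖ :=
      norm_inner_le_norm _ _
    have h4 : ‖(z * star z) sf.Ω‖ ≤ ‖z‖ ^ 2 := by
      have h5 := (z * star z).le_opNorm sf.Ω
      have h6 : ‖z * star z‖ ≤ ‖z‖ ^ 2 := by
        calc ‖z * star z‖ ≤ ‖z‖ * ‖star z‖ := norm_mul_le _ _
          _ = ‖z‖ ^ 2 := by rw [norm_star, sq]
      rw [sf.norm_Ω, mul_one] at h5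
      exact h5.trans h6
    nlinarith [norm_nonneg (P sf.Ω), norm_nonneg ((z * star z) sf.Ω)]
  have h4 : (0:ℝ) ≤ ‖P sf.Ω‖ := norm_nonneg _
  have h5 : (‖z‖ * Real.sqrt ‖P sf.Ω‖) ^ 2 = ‖z‖ ^ 2 * ‖P sf.Ω‖ := by
    rw [mul_pow, Real.sq_sqrt h4]
  nlinarith [norm_nonneg (P (z sf.Ω)), mul_nonneg (norm_nonneg z) (Real.sqrt_nonneg ‖P sf.Ω‖)]

open Filter in
lemma aux_compact_weaknull {C : H →L[ℂ] H} (hC : IsCompactOperator ⇑C) {ξ : ℕ → H} {R : ℝ}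
    (hb : ∀ n, ‖ξ n‖ ≤ R)
    (hw : ∀ η : H, Tendsto (fun n => (inner ℂ (ξ n) η : ℂ)) atTop (nhds 0)) :
    Tendsto (fun n => ‖C (ξ n)‖) atTop (nhds 0) := by
  by_contra hcon
  have hS : IsCompact (closure ((C : H →ₗ[ℂ] H) '' Metric.closedBall 0 R)) :=
    IsCompactOperator.isCompact_closure_image_of_bounded (f := (C : H →ₗ[ℂ] H)) hC
      Metric.isBounded_closedBall
  rw [Metric.tendsto_atTop] at hcon
  push_neg at hcon
  obtain ⟨ε, hε, hfreq⟩ := hcon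
  have hfreq' : ∀ N, ∃ n > N, ε ≤ ‖C (ξ n)‖ := by
    intro N
    obtain ⟨n, hn, hd⟩ := hfreq (N + 1)
    refine ⟨n, lt_of_lt_of_le (Nat.lt_succ_self N) hn, ?_⟩
    simpa [Real.dist_eq, abs_of_nonneg (norm_nonneg _)] using hd
  obtain ⟨φ, hφmono, hφ⟩ := Nat.exists_strictMono_subsequence hfreq'
  have hmem : ∀ n, C (ξ (φ n)) ∈ closure ((C : H →ₗ[ℂ] H) '' Metric.closedBall 0 R) := fun n =>
    subset_closure ⟨ξ (φ n), mem_closedBall_zero_iff.2 (hb _), rfl⟩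
  obtain ⟨η, hηS, ψ, hψmono, hψtend⟩ := hS.tendsto_subseq hmem
  have hη0 : η = 0 := by
    have hz : ∀ ζ : H, (inner ℂ η ζ : ℂ) = 0 := by
      intro ζ
      have h1 : Tendsto (fun n => (inner ℂ (C (ξ (φ (ψ n)))) ζ : ℂ)) atTop (nhds (inner ℂ η ζ)) :=
        hψtend.inner tendsto_const_nhds
      have h2 : Tendsto (fun n => (inner ℂ (C (ξ (φ (ψ n)))) ζ : ℂ)) atTop (nhds 0) := by
        have h3 : ∀ n : ℕ, (inner ℂ (C (ξ n)) ζ : ℂ) = inner ℂ (ξ n) ((star C) ζ) := fun n =>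
          inner_op_move C (ξ n) ζ
        simp only [h3]
        exact (hw ((star C) ζ)).comp ((hφmono.comp hψmono).tendsto_atTop)
      exact tendsto_nhds_unique h1 h2
    exact inner_self_eq_zero.mp (hz η)
  have hεη : ε ≤ ‖η‖ := ge_of_tendsto' hψtend.norm fun n => hφ (ψ n)
  rw [hη0, norm_zero] at hεη
  linarith

open Filter in
lemma aux_weaknull (sf : StandardForm M) {u e x : H →L[ℂ] H} (hu : u ∈ M) (hx : x ∈ M)
    (hep : IsProjection e) (huu : star u * u = e) (heu : e * u = u)
    (hHaar : ∀ n : ℕ, 0 < n → SFtrace sf (u ^ n) = 0) (η : H) :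
    Tendsto (fun n : ℕ => (inner ℂ ((u ^ (n + 1)) (x sf.Ω)) η : ℂ)) atTop (nhds 0) := by
  have heun : ∀ n : ℕ, e * u ^ (n + 1) = u ^ (n + 1) := fun n => by
    rw [pow_succ' u n, ← mul_assoc, heu]
  have hA : ∀ n : ℕ, star (u ^ (n + 1)) * u ^ (n + 1) = e := aux_star_pow huu heu
  have hnorm1 : ∀ (n : ℕ) (ζ : H), ‖(u ^ (n + 1)) ζ‖ ≤ ‖ζ‖ := fun n ζ =>
    aux_pisom_norm_apply_le hep (hA n) ζ
  have htr : ∀ k : ℕ, (inner ℂ ((u ^ (k + 1)) sf.Ω) sf.Ω : ℂ) = 0 := fun k =>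
    hHaar (k + 1) k.succ_pos
  -- orthogonality
  have horthlt : ∀ a b : ℕ, b < a →
      (inner ℂ ((u ^ (a + 1)) sf.Ω) ((u ^ (b + 1)) sf.Ω) : ℂ) = 0 := by
    intro a b hba
    have h1 : (inner ℂ ((u ^ (a + 1)) sf.Ω) ((u ^ (b + 1)) sf.Ω) : ℂ)
        = inner ℂ ((star (u ^ (b + 1))) ((u ^ (a + 1)) sf.Ω)) sf.Ω :=
      (inner_star_left (u ^ (b + 1)) ((u ^ (a + 1)) sf.Ω) sf.Ω).symm
    obtain ⟨k, hk⟩ : ∃ k : ℕ, a = b + 1 + k := ⟨a - (b + 1), by omega⟩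
    have hsplit : u ^ (a + 1) = u ^ (b + 1) * u ^ (k + 1) := by
      rw [hk, show b + 1 + k + 1 = (b + 1) + (k + 1) from by omega, pow_add]
    have h2 : star (u ^ (b + 1)) * u ^ (a + 1) = u ^ (k + 1) := by
      rw [hsplit, ← mul_assoc, hA b, heun k]
    rw [h1, ← ContinuousLinearMap.mul_apply, h2, htr k]
  have horth : ∀ a b : ℕ, a ≠ b →
      (inner ℂ ((u ^ (a + 1)) sf.Ω) ((u ^ (b + 1)) sf.Ω) : ℂ) = 0 := by
    intro a b hab
    rcases lt_or_gt_of_ne hab with h | h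
    · rw [← inner_conj_symm, horthlt b a h, map_zero]
    · exact horthlt a b h
  have hnormw : ∀ n : ℕ, ‖(u ^ (n + 1)) sf.Ω‖ = ‖e sf.Ω‖ := by
    intro n
    have h1 : (inner ℂ ((u ^ (n + 1)) sf.Ω) ((u ^ (n + 1)) sf.Ω) : ℂ)
        = inner ℂ sf.Ω (e sf.Ω) := by
      rw [inner_op_move (u ^ (n + 1)) sf.Ω ((u ^ (n + 1)) sf.Ω),
        ← ContinuousLinearMap.mul_apply, hA n]
    have h2 : (inner ℂ (e sf.Ω) (e sf.Ω) : ℂ) = inner ℂ sf.Ω (e sf.Ω) := by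
      rw [inner_op_move e sf.Ω (e sf.Ω), hep.1.star_eq, ← ContinuousLinearMap.mul_apply, hep.2]
    have h3 : ‖(u ^ (n + 1)) sf.Ω‖ ^ 2 = ‖e sf.Ω‖ ^ 2 := by
      rw [aux_normsq, aux_normsq, h1, h2]
    calc ‖(u ^ (n + 1)) sf.Ω‖ = Real.sqrt (‖(u ^ (n + 1)) sf.Ω‖ ^ 2) :=
          (Real.sqrt_sq (norm_nonneg _)).symm
      _ = ‖e sf.Ω‖ := by rw [h3, Real.sqrt_sq (norm_nonneg _)]
  -- weak nullity of u^{n+1} Ω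
  have hO : ∀ ζ : H, Tendsto (fun n : ℕ => (inner ℂ ((u ^ (n + 1)) sf.Ω) ζ : ℂ)) atTop (nhds 0) := by
    intro ζ
    rcases eq_or_lt_of_le (norm_nonneg (e sf.Ω)) with hc0 | hc0
    · have hz : ∀ n : ℕ, (u ^ (n + 1)) sf.Ω = 0 := fun n =>
        norm_eq_zero.mp (by rw [hnormw n, ← hc0])
      have : (fun n : ℕ => (inner ℂ ((u ^ (n + 1)) sf.Ω) ζ : ℂ)) = fun _ => 0 := by
        funext n; rw [hz n, inner_zero_left]
      rw [this]; exact tendsto_const_nhds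
    · set c : ℝ := ‖e sf.Ω‖ with hc
      have hcne : (c : ℂ) ≠ 0 := Complex.ofReal_ne_zero.mpr (ne_of_gt hc0)
      set v : ℕ → H := fun n => ((c : ℂ))⁻¹ • (u ^ (n + 1)) sf.Ω with hv
      have hvon : Orthonormal ℂ v := by
        rw [orthonormal_iff_ite]
        intro i j
        by_cases hij : i = j
        · subst hij
          rw [if_pos rfl]
          simp only [hv]
          rw [inner_smul_left, inner_smul_right, inner_self_eq_norm_sq_to_K, hnormw i,
            map_inv₀, Complex.conj_ofReal]
          field_simp
          norm_cast
        · simp only [hv, inner_smul_left, inner_smul_right, if_neg hij, horth i j hij, mul_zero]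
      have hsum : Summable fun i => ‖(inner ℂ (v i) ζ : ℂ)‖ ^ 2 := hvon.inner_products_summable ζ
      have h6 : Tendsto (fun i => ‖(inner ℂ (v i) ζ : ℂ)‖ ^ 2) atTop (nhds 0) :=
        hsum.tendsto_atTop_zero
      have h7 : Tendsto (fun i => ‖(inner ℂ (v i) ζ : ℂ)‖) atTop (nhds 0) := by
        have h8 := (Real.continuous_sqrt.tendsto 0).comp h6
        rw [Real.sqrt_zero] at h8
        have heq : (fun i => Real.sqrt (‖(inner ℂ (v i) ζ : ℂ)‖ ^ 2))
            = fun i => ‖(inner ℂ (v i) ζ : ℂ)‖ :=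
          funext fun i => Real.sqrt_sq (norm_nonneg _)
        rw [← heq]
        exact h8
      have h9 : Tendsto (fun i => (inner ℂ (v i) ζ : ℂ)) atTop (nhds 0) :=
        tendsto_zero_iff_norm_tendsto_zero.mpr h7
      have h10 : Tendsto (fun i => (c : ℂ) * (inner ℂ (v i) ζ : ℂ)) atTop (nhds 0) := by
        simpa using h9.const_mul ((c : ℂ))
      have h11 : (fun n : ℕ => (inner ℂ ((u ^ (n + 1)) sf.Ω) ζ : ℂ))
          = fun i => (c : ℂ) * (inner ℂ (v i) ζ : ℂ) := by
        funext i
        rw [hv]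
        simp only [inner_smul_left, map_inv₀, Complex.conj_ofReal]
        rw [← mul_assoc, mul_inv_cancel₀ hcne, one_mul]
      rw [h11]
      exact h10
  -- reduction to Ω
  have hred : ∀ y : H →L[ℂ] H, y ∈ M → ∀ n : ℕ,
      (inner ℂ ((u ^ (n + 1)) (x sf.Ω)) (y sf.Ω) : ℂ)
        = inner ℂ ((u ^ (n + 1)) sf.Ω) ((y * star x) sf.Ω) := by
    intro y hy n
    have e1 : (inner ℂ ((u ^ (n + 1)) (x sf.Ω)) (y sf.Ω) : ℂ)
        = inner ℂ (((star y * u ^ (n + 1)) * x) sf.Ω) sf.Ω := by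
      rw [← inner_star_left y ((u ^ (n + 1)) (x sf.Ω)) sf.Ω]
      exact congrArg (fun t => (inner ℂ t sf.Ω : ℂ))
        (by simp [ContinuousLinearMap.mul_apply, mul_assoc])
    have e3 := sf.tracial (star y * u ^ (n + 1)) (mul_mem (star_mem hy) (pow_mem hu (n + 1))) x hx
    have e4 : (inner ℂ ((x * (star y * u ^ (n + 1))) sf.Ω) sf.Ω : ℂ)
        = inner ℂ ((u ^ (n + 1)) sf.Ω) ((y * star x) sf.Ω) := by
      rw [← mul_assoc, ContinuousLinearMap.mul_apply,
        inner_op_move (x * star y) ((u ^ (n + 1)) sf.Ω) sf.Ω, star_mul, star_star]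
    rw [e1, e3, e4]
  -- epsilon/3
  rw [NormedAddCommGroup.tendsto_nhds_zero]
  intro ε hε
  have hd : 0 < ε / (2 * (‖x‖ + 1)) := by positivity
  obtain ⟨ζ', hζ'S, hζ'd⟩ := sf.cyclic.exists_dist_lt η hd
  obtain ⟨y, hyM, hyΩ⟩ := hζ'S
  have h8 : Tendsto (fun n : ℕ => (inner ℂ ((u ^ (n + 1)) (x sf.Ω)) (y sf.Ω) : ℂ)) atTop (nhds 0) :=
    (hO ((y * star x) sf.Ω)).congr fun n => (hred y hyM n).symm
  rw [NormedAddCommGroup.tendsto_nhds_zero] at h8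
  filter_upwards [h8 (ε / 2) (by positivity)] with n hn
  have hxΩ : ‖(u ^ (n + 1)) (x sf.Ω)‖ ≤ ‖x‖ := by
    refine (hnorm1 n _).trans ?_
    have := x.le_opNorm sf.Ω
    rwa [sf.norm_Ω, mul_one] at this
  have hsplit : (inner ℂ ((u ^ (n + 1)) (x sf.Ω)) η : ℂ)
      = inner ℂ ((u ^ (n + 1)) (x sf.Ω)) (y sf.Ω)
        + inner ℂ ((u ^ (n + 1)) (x sf.Ω)) (η - y sf.Ω) := by
    rw [← inner_add_right]
    congr 1
    abel
  have hb1 : ‖(inner ℂ ((u ^ (n + 1)) (x sf.Ω)) (η - y sf.Ω) : ℂ)‖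
      ≤ ‖x‖ * (ε / (2 * (‖x‖ + 1))) := by
    calc ‖(inner ℂ ((u ^ (n + 1)) (x sf.Ω)) (η - y sf.Ω) : ℂ)‖
        ≤ ‖(u ^ (n + 1)) (x sf.Ω)‖ * ‖η - y sf.Ω‖ := norm_inner_le_norm _ _
      _ ≤ ‖x‖ * (ε / (2 * (‖x‖ + 1))) := by
          apply mul_le_mul hxΩ _ (norm_nonneg _) (norm_nonneg x)
          rw [← dist_eq_norm]
          have : dist η (y sf.Ω) < ε / (2 * (‖x‖ + 1)) := by
            rw [show y sf.Ω = ζ' from hyΩ]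
            exact hζ'd
          exact this.le
  have hb2 : ‖x‖ * (ε / (2 * (‖x‖ + 1))) ≤ ε / 2 := by
    have hx0 : (0:ℝ) ≤ ‖x‖ := norm_nonneg x
    have h2 : (0:ℝ) < ‖x‖ + 1 := by linarith
    have h3 := mul_le_mul_of_nonneg_right (show ‖x‖ ≤ ‖x‖ + 1 by linarith) (le_of_lt hd)
    have h4 : (‖x‖ + 1) * (ε / (2 * (‖x‖ + 1))) = ε / 2 := by
      field_simp
    linarith
  calc ‖(inner ℂ ((u ^ (n + 1)) (x sf.Ω)) η : ℂ)‖
      ≤ ‖(inner ℂ ((u ^ (n + 1)) (x sf.Ω)) (y sf.Ω) : ℂ)‖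
        + ‖(inner ℂ ((u ^ (n + 1)) (x sf.Ω)) (η - y sf.Ω) : ℂ)‖ := by
        rw [hsplit]; exact norm_add_le _ _
    _ < ε / 2 + ε / 2 := by
        have := hb1.trans hb2
        exact add_lt_add_of_lt_of_le hn this
    _ = ε := by ring

/-- Let `B ⊆ eMe` be a diffuse von Neumann subalgebra (diffuseness
witnessed, equivalently, by a Haar unitary `u ∈ B`: `u^*u = uu^* = e` and `τ(uⁿ) = 0`
for `n ≥ 1`) and `σ : B → fMf` a unital faithful `*`-homomorphism, for nonzero
projections `e, f ∈ M`. If `K ∈ qK_M` satisfies `Kb = σ(b)K` for all `b ∈ B`, then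
`K = (1-f)K(1-e)`. -/
theorem qK_no_intertwining (sf : StandardForm M)
    (e f : H →L[ℂ] H) (he : e ∈ M) (hf : f ∈ M)
    (hep : IsProjection e) (hfp : IsProjection f) (he0 : e ≠ 0) (hf0 : f ≠ 0)
    (B : Set (H →L[ℂ] H)) (hBM : B ⊆ (M : Set (H →L[ℂ] H)))
    (hBe : ∀ b ∈ B, e * b * e = b) (heB : e ∈ B)
    (hBadd : ∀ a ∈ B, ∀ b ∈ B, a + b ∈ B)
    (hBmul : ∀ a ∈ B, ∀ b ∈ B, a * b ∈ B)
    (hBstar : ∀ b ∈ B, star b ∈ B)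
    (hBsmul : ∀ (c : ℂ), ∀ b ∈ B, c • b ∈ B)
    (hdiffuse : ∃ u ∈ B, star u * u = e ∧ u * star u = e ∧
      ∀ n : ℕ, 0 < n → SFtrace sf (u ^ n) = 0)
    (σ : (H →L[ℂ] H) → (H →L[ℂ] H))
    (hσM : ∀ b ∈ B, σ b ∈ M) (hσf : ∀ b ∈ B, f * σ b * f = σ b)
    (hσadd : ∀ a ∈ B, ∀ b ∈ B, σ (a + b) = σ a + σ b)
    (hσmul : ∀ a ∈ B, ∀ b ∈ B, σ (a * b) = σ a * σ b)
    (hσstar : ∀ b ∈ B, σ (star b) = star (σ b))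
    (hσsmul : ∀ (c : ℂ), ∀ b ∈ B, σ (c • b) = c • σ b)
    (hσe : σ e = f)
    (hσfaithful : ∀ b ∈ B, σ b = 0 → b = 0)
    (K : H →L[ℂ] H) (hK : K ∈ qK sf)
    (hcomm : ∀ b ∈ B, K * b = σ b * K) :
    K = (1 - f) * K * (1 - e) := by
  classical
  obtain ⟨u, huB, huu, huu', hHaar⟩ := hdiffuse
  obtain ⟨hesa, hee⟩ := hep
  obtain ⟨hfsa, hff⟩ := hfp
  have huM : u ∈ M := hBM huB
  have hsand : e * u * e = u := hBe u huB
  have heu : e * u = u := aux_sand_left hee hsand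
  have hue : u * e = u := aux_sand_right hee hsand
  set w : H →L[ℂ] H := σ u with hwdef
  have hwM : w ∈ M := hσM u huB
  have hwsand : f * w * f = w := hσf u huB
  have hfw : f * w = w := aux_sand_left hff hwsand
  have hww : star w * w = f := by
    rw [hwdef, ← hσstar u huB, ← hσmul _ (hBstar u huB) _ huB, huu, hσe]
  have hA : ∀ n : ℕ, star (u ^ (n + 1)) * u ^ (n + 1) = e :=
    aux_star_pow huu heu
  have hAw : ∀ n : ℕ, star (w ^ (n + 1)) * w ^ (n + 1) = f :=
    aux_star_pow hww hfw
  have hKu1 : K * u = w * K := by rw [hcomm u huB, hwdef]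
  have hKun : ∀ n : ℕ, K * u ^ (n + 1) = w ^ (n + 1) * K := by
    intro n
    induction n with
    | zero => simpa using hKu1
    | succ m ih =>
      rw [pow_succ u, ← mul_assoc, ih, mul_assoc, hKu1, ← mul_assoc, ← pow_succ]
  -- main inner-product vanishing
  have main : ∀ x ∈ M, ∀ y ∈ M, (inner ℂ ((f * K) (x sf.Ω)) (y sf.Ω) : ℂ) = 0 := by
    intro x hx y hy
    have hξb : ∀ n : ℕ, ‖(u ^ (n + 1)) (x sf.Ω)‖ ≤ ‖x‖ := by
      intro n
      refine (aux_pisom_norm_apply_le ⟨hesa, hee⟩ (hA n) _).trans ?_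
      have := x.le_opNorm sf.Ω
      rwa [sf.norm_Ω, mul_one] at this
    have hξw : ∀ η : H,
        Filter.Tendsto (fun n : ℕ => (inner ℂ ((u ^ (n + 1)) (x sf.Ω)) η : ℂ))
          Filter.atTop (nhds 0) :=
      fun η => aux_weaknull sf huM hx ⟨hesa, hee⟩ huu heu hHaar η
    -- identity relating v to K ξ n
    have hvn : ∀ n : ℕ, (inner ℂ ((f * K) (x sf.Ω)) (y sf.Ω) : ℂ)
        = inner ℂ (K ((u ^ (n + 1)) (x sf.Ω))) ((w ^ (n + 1) * y) sf.Ω) := by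
      intro n
      have h2 : f * K = star (w ^ (n + 1)) * (K * u ^ (n + 1)) := by
        rw [hKun n, ← mul_assoc, hAw n]
      have h3 : (f * K) (x sf.Ω)
          = (star (w ^ (n + 1))) (K ((u ^ (n + 1)) (x sf.Ω))) := by
        rw [h2]
        simp [ContinuousLinearMap.mul_apply]
      rw [h3, inner_star_left]
      exact congrArg (fun t => (inner ℂ (K ((u ^ (n + 1)) (x sf.Ω))) t : ℂ))
        (by simp [ContinuousLinearMap.mul_apply])
    obtain ⟨Kc, q, c, hKcpt, hKcb, hqMp, htr0, hnorm0⟩ := hK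
    set g : ℕ → ℝ := fun m => ‖((1 : H →L[ℂ] H) - q m) sf.Ω‖ with hgdef
    have hgtr : ∀ m : ℕ, (SFtrace sf (1 - q m)).re = g m ^ 2 := by
      intro m
      obtain ⟨hqM, hqsa, hqq⟩ := hqMp m
      have hPsa : star ((1 : H →L[ℂ] H) - q m) = (1 : H →L[ℂ] H) - q m := by
        rw [star_sub, star_one, hqsa.star_eq]
      have hPP : ((1 : H →L[ℂ] H) - q m) * ((1 : H →L[ℂ] H) - q m)
          = (1 : H →L[ℂ] H) - q m := by
        rw [sub_mul, one_mul, mul_sub, mul_one, hqq, sub_self, sub_zero]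
      have h1 : (inner ℂ (((1 : H →L[ℂ] H) - q m) sf.Ω) (((1 : H →L[ℂ] H) - q m) sf.Ω) : ℂ)
          = inner ℂ sf.Ω (((1 : H →L[ℂ] H) - q m) sf.Ω) := by
        rw [inner_op_move ((1 : H →L[ℂ] H) - q m) sf.Ω
          (((1 : H →L[ℂ] H) - q m) sf.Ω), hPsa]
        congr 1
        rw [← ContinuousLinearMap.mul_apply, hPP]
      have h2 : (SFtrace sf (1 - q m)).re
          = ‖((1 : H →L[ℂ] H) - q m) sf.Ω‖ ^ 2 := by
        have h3 : SFtrace sf (1 - q m)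
            = (starRingEnd ℂ) (inner ℂ sf.Ω (((1 : H →L[ℂ] H) - q m) sf.Ω) : ℂ) := by
          rw [SFtrace, inner_conj_symm]
        rw [h3, ← h1, inner_self_eq_norm_sq_to_K]
        simp [← Complex.ofReal_pow]
      exact h2
    have hgten : Filter.Tendsto g Filter.atTop (nhds 0) := by
      have h1 : Filter.Tendsto (fun m => Real.sqrt ((SFtrace sf (1 - q m)).re))
          Filter.atTop (nhds 0) := by
        have := (Real.continuous_sqrt.tendsto 0).comp htr0
        rwa [Real.sqrt_zero] at this
      refine h1.congr fun m => ?_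
      rw [hgtr m, Real.sqrt_sq (norm_nonneg _)]
    set s : ℕ → ℝ := fun m => Real.sqrt (g m) with hsdef
    have hsten : Filter.Tendsto s Filter.atTop (nhds 0) := by
      have := (Real.continuous_sqrt.tendsto 0).comp hgten
      rwa [Real.sqrt_zero] at this
    set δ : ℕ → ℝ := fun m => ‖q m * (K - Kc m) * q m‖ with hδdef
    -- per-m bound
    have hkey : ∀ m : ℕ, ‖(inner ℂ ((f * K) (x sf.Ω)) (y sf.Ω) : ℂ)‖
        ≤ (‖K‖ * ‖x‖) * (‖y‖ * s m) + (‖K‖ * (‖x‖ * s m)) * ‖y‖ + (δ m * ‖x‖) * ‖y‖ := by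
      intro m
      obtain ⟨hqM, hqproj⟩ := hqMp m
      obtain ⟨hqsa, hqq⟩ := hqproj
      -- compactness of Q Kc Q
      have hcc : IsCompactOperator ⇑(q m * Kc m * q m) := by
        have h1 : IsCompactOperator (⇑(Kc m) ∘ ⇑(q m)) := (hKcpt m).comp_clm (q m)
        have h2 : IsCompactOperator (⇑(q m) ∘ (⇑(Kc m) ∘ ⇑(q m))) := h1.clm_comp (q m)
        have h3 : ⇑(q m * Kc m * q m) = ⇑(q m) ∘ (⇑(Kc m) ∘ ⇑(q m)) := by
          funext ζ
          simp [ContinuousLinearMap.mul_apply, Function.comp]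
        rw [h3]
        exact h2
      have hcmpt : Filter.Tendsto (fun n : ℕ => ‖(q m * Kc m * q m) ((u ^ (n + 1)) (x sf.Ω))‖)
          Filter.atTop (nhds 0) :=
        aux_compact_weaknull hcc hξb hξw
      -- per-n bound
      have hb : ∀ n : ℕ, ‖(inner ℂ ((f * K) (x sf.Ω)) (y sf.Ω) : ℂ)‖
          ≤ (‖K‖ * ‖x‖) * (‖y‖ * s m) + (‖K‖ * (‖x‖ * s m)) * ‖y‖ + (δ m * ‖x‖) * ‖y‖
            + ‖(q m * Kc m * q m) ((u ^ (n + 1)) (x sf.Ω))‖ * ‖y‖ := by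
        intro n
        set ξn : H := (u ^ (n + 1)) (x sf.Ω) with hξn
        set z : H →L[ℂ] H := w ^ (n + 1) * y with hz
        have hzM : z ∈ M := mul_mem (pow_mem hwM _) hy
        have hzn : ‖z‖ ≤ ‖y‖ := by
          calc ‖z‖ ≤ ‖w ^ (n + 1)‖ * ‖y‖ := norm_mul_le _ _
            _ ≤ 1 * ‖y‖ := by
                apply mul_le_mul_of_nonneg_right _ (norm_nonneg y)
                exact aux_opnorm_le_one ⟨hfsa, hff⟩ (hAw n)
            _ = ‖y‖ := one_mul _
        have hzΩ : ‖z sf.Ω‖ ≤ ‖y‖ := by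
          refine le_trans ?_ hzn
          have := z.le_opNorm sf.Ω
          rwa [sf.norm_Ω, mul_one] at this
        have hPsa : star ((1 : H →L[ℂ] H) - q m) = (1 : H →L[ℂ] H) - q m := by
          rw [star_sub, star_one, hqsa.star_eq]
        have hPP : ((1 : H →L[ℂ] H) - q m) * ((1 : H →L[ℂ] H) - q m)
            = (1 : H →L[ℂ] H) - q m := by
          rw [sub_mul, one_mul, mul_sub, mul_one, hqq, sub_self, sub_zero]
        have hPproj : IsProjection ((1 : H →L[ℂ] H) - q m) :=
          ⟨by rw [IsSelfAdjoint]; exact hPsa, hPP⟩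
        have hKξ : ‖K ξn‖ ≤ ‖K‖ * ‖x‖ := by
          refine (K.le_opNorm ξn).trans ?_
          exact mul_le_mul_of_nonneg_left (hξb n) (norm_nonneg K)
        -- decomposition
        have hdec : K ξn = ((1 : H →L[ℂ] H) - q m) (K ξn)
            + (q m) (K (((1 : H →L[ℂ] H) - q m) ξn))
            + (q m * (K - Kc m) * q m) ξn + (q m * Kc m * q m) ξn := by
          simp only [ContinuousLinearMap.mul_apply, ContinuousLinearMap.sub_apply,
            ContinuousLinearMap.one_apply, map_sub]
          abel
        rw [hvn n, ← hz, ← hξn, hdec, inner_add_left, inner_add_left, inner_add_left]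
        have T1 : ‖(inner ℂ (((1 : H →L[ℂ] H) - q m) (K ξn)) (z sf.Ω) : ℂ)‖
            ≤ (‖K‖ * ‖x‖) * (‖y‖ * s m) := by
          rw [inner_op_move _ (K ξn) (z sf.Ω), hPsa]
          refine (norm_inner_le_norm _ _).trans ?_
          have hcut := aux_cut sf hqM ⟨hqsa, hqq⟩ hzM
          have hcut2 : ‖((1 : H →L[ℂ] H) - q m) (z sf.Ω)‖ ≤ ‖y‖ * s m := by
            refine hcut.trans ?_
            exact mul_le_mul_of_nonneg_right hzn (Real.sqrt_nonneg _)
          exact mul_le_mul hKξ hcut2 (norm_nonneg _) (by positivity)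
        have T2 : ‖(inner ℂ ((q m) (K (((1 : H →L[ℂ] H) - q m) ξn))) (z sf.Ω) : ℂ)‖
            ≤ (‖K‖ * (‖x‖ * s m)) * ‖y‖ := by
          refine (norm_inner_le_norm _ _).trans ?_
          have h1 : ‖(q m) (K (((1 : H →L[ℂ] H) - q m) ξn))‖ ≤ ‖K‖ * (‖x‖ * s m) := by
            refine (aux_proj_norm_apply_le ⟨hqsa, hqq⟩ _).trans ?_
            refine (K.le_opNorm _).trans ?_
            refine mul_le_mul_of_nonneg_left ?_ (norm_nonneg K)
            have hξeq : ξn = (u ^ (n + 1) * x) sf.Ω := by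
              rw [hξn, ContinuousLinearMap.mul_apply]
            rw [hξeq]
            refine (aux_cut sf hqM ⟨hqsa, hqq⟩ (mul_mem (pow_mem huM _) hx)).trans ?_
            refine mul_le_mul_of_nonneg_right ?_ (Real.sqrt_nonneg _)
            calc ‖u ^ (n + 1) * x‖ ≤ ‖u ^ (n + 1)‖ * ‖x‖ := norm_mul_le _ _
              _ ≤ 1 * ‖x‖ := mul_le_mul_of_nonneg_right
                  (aux_opnorm_le_one ⟨hesa, hee⟩ (hA n)) (norm_nonneg x)
              _ = ‖x‖ := one_mul _
          exact mul_le_mul h1 hzΩ (norm_nonneg _) (by positivity)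
        have T3 : ‖(inner ℂ ((q m * (K - Kc m) * q m) ξn) (z sf.Ω) : ℂ)‖
            ≤ (δ m * ‖x‖) * ‖y‖ := by
          refine (norm_inner_le_norm _ _).trans ?_
          have h1 : ‖(q m * (K - Kc m) * q m) ξn‖ ≤ δ m * ‖x‖ := by
            refine ((q m * (K - Kc m) * q m).le_opNorm ξn).trans ?_
            exact mul_le_mul_of_nonneg_left (hξb n) (norm_nonneg _)
          exact mul_le_mul h1 hzΩ (norm_nonneg _) (by positivity)
        have T4 : ‖(inner ℂ ((q m * Kc m * q m) ξn) (z sf.Ω) : ℂ)‖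
            ≤ ‖(q m * Kc m * q m) ξn‖ * ‖y‖ := by
          refine (norm_inner_le_norm _ _).trans ?_
          exact mul_le_mul_of_nonneg_left hzΩ (norm_nonneg _)
        calc ‖(inner ℂ (((1 : H →L[ℂ] H) - q m) (K ξn)) (z sf.Ω)
              + inner ℂ ((q m) (K (((1 : H →L[ℂ] H) - q m) ξn))) (z sf.Ω)
              + inner ℂ ((q m * (K - Kc m) * q m) ξn) (z sf.Ω)
              + inner ℂ ((q m * Kc m * q m) ξn) (z sf.Ω) : ℂ)‖
            ≤ ‖(inner ℂ (((1 : H →L[ℂ] H) - q m) (K ξn)) (z sf.Ω) : ℂ)‖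
              + ‖(inner ℂ ((q m) (K (((1 : H →L[ℂ] H) - q m) ξn))) (z sf.Ω) : ℂ)‖
              + ‖(inner ℂ ((q m * (K - Kc m) * q m) ξn) (z sf.Ω) : ℂ)‖
              + ‖(inner ℂ ((q m * Kc m * q m) ξn) (z sf.Ω) : ℂ)‖ :=
              le_trans (norm_add_le _ _) (add_le_add_left (le_trans (norm_add_le _ _)
                (add_le_add_left (norm_add_le _ _) _)) _)
          _ ≤ (‖K‖ * ‖x‖) * (‖y‖ * s m) + (‖K‖ * (‖x‖ * s m)) * ‖y‖ + (δ m * ‖x‖) * ‖y‖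
              + ‖(q m * Kc m * q m) ξn‖ * ‖y‖ := by
              exact add_le_add (add_le_add (add_le_add T1 T2) T3) T4
      -- take n → ∞
      have hlim : Filter.Tendsto (fun n : ℕ =>
          (‖K‖ * ‖x‖) * (‖y‖ * s m) + (‖K‖ * (‖x‖ * s m)) * ‖y‖ + (δ m * ‖x‖) * ‖y‖
            + ‖(q m * Kc m * q m) ((u ^ (n + 1)) (x sf.Ω))‖ * ‖y‖)
          Filter.atTop (nhds ((‖K‖ * ‖x‖) * (‖y‖ * s m) + (‖K‖ * (‖x‖ * s m)) * ‖y‖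
            + (δ m * ‖x‖) * ‖y‖)) := by
        have h1 := (hcmpt.mul_const ‖y‖).const_add
          ((‖K‖ * ‖x‖) * (‖y‖ * s m) + (‖K‖ * (‖x‖ * s m)) * ‖y‖ + (δ m * ‖x‖) * ‖y‖)
        simpa [add_assoc] using h1
      exact ge_of_tendsto' hlim hb
    -- take m → ∞
    have hlim2 : Filter.Tendsto (fun m : ℕ =>
        (‖K‖ * ‖x‖) * (‖y‖ * s m) + (‖K‖ * (‖x‖ * s m)) * ‖y‖ + (δ m * ‖x‖) * ‖y‖)
        Filter.atTop (nhds 0) := by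
      have h1 : Filter.Tendsto (fun m => (‖K‖ * ‖x‖) * (‖y‖ * s m)) Filter.atTop (nhds 0) := by
        simpa using (hsten.const_mul ‖y‖).const_mul (‖K‖ * ‖x‖)
      have h2 : Filter.Tendsto (fun m => (‖K‖ * (‖x‖ * s m)) * ‖y‖) Filter.atTop (nhds 0) := by
        simpa using ((hsten.const_mul ‖x‖).const_mul ‖K‖).mul_const ‖y‖
      have h3 : Filter.Tendsto (fun m => (δ m * ‖x‖) * ‖y‖) Filter.atTop (nhds 0) := by
        simpa using (hnorm0.mul_const ‖x‖).mul_const ‖y‖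
      simpa using (h1.add h2).add h3
    have hle0 : ‖(inner ℂ ((f * K) (x sf.Ω)) (y sf.Ω) : ℂ)‖ ≤ 0 := ge_of_tendsto' hlim2 hkey
    exact norm_le_zero_iff.mp hle0
  -- f * K = 0
  have hfK : f * K = 0 := by
    have h1 : ∀ x ∈ M, (f * K) (x sf.Ω) = 0 := by
      intro x hx
      have h2 : Set.EqOn (fun ζ : H => (inner ℂ ((f * K) (x sf.Ω)) ζ : ℂ)) (fun _ => 0)
          ((fun T : H →L[ℂ] H => T sf.Ω) '' (M : Set (H →L[ℂ] H))) := by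
        rintro ζ ⟨T, hT, rfl⟩
        exact main x hx T hT
      have h3 := Continuous.ext_on sf.cyclic (continuous_const.inner continuous_id)
        continuous_const h2
      exact inner_self_eq_zero.mp (congrFun h3 ((f * K) (x sf.Ω)))
    have h5 : Set.EqOn (fun ζ : H => (f * K) ζ) (fun _ => (0 : H))
        ((fun T : H →L[ℂ] H => T sf.Ω) '' (M : Set (H →L[ℂ] H))) := by
      rintro ζ ⟨T, hT, rfl⟩
      exact h1 T hT
    have h6 := Continuous.ext_on sf.cyclic (f * K).continuous continuous_const h5
    exact ContinuousLinearMap.ext fun ζ => congrFun h6 ζ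
  have hKe : K * e = 0 := by rw [hcomm e heB, hσe, hfK]
  rw [sub_mul, one_mul, hfK, sub_zero, mul_sub, mul_one, hKe, sub_zero]
end
end
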